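/- arXiv:1011.2888 — 7 statements merged into one kernel-verified Lean document; each statement's English description precedes it below -/
import Mathlib

section
/- Every Condorcet domain D ⊆ L([n]) that contains the order α = 1<2<...<n and the order ω = n<...<2<1 is contained in D(c) for some casting c; that is, there is an assignment c of one of the symbols ∩, ∪, →, ← to each triple i<j<k such that the restriction of every member of D to each triple {i,j,k} lies in D₃(c(ijk)). -/
/-- The set of linear orders on `{1,…,n}`, encoded as words (lists) listing the
alternatives from worst to best; such a word is a permutation of `1,2,…,n`. -/
def LinWords (n : ℕ) : Set (List ℕ) := {l | l.Perm (List.range' 1 n)}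

/-- Linear orders on a finite ground set `X ⊆ ℕ`, encoded as words. -/
def LinWordsOn (X : Finset ℕ) : Set (List ℕ) := {l | l.Perm (X.sort (· ≤ ·))}

/-- `ltIn σ i j` : `i` occurs before (i.e. is worse than) `j` in the word `σ`;
this is the relation `i <_σ j`. -/
def ltIn (σ : List ℕ) (i j : ℕ) : Prop := σ.idxOf i < σ.idxOf j

instance (σ : List ℕ) (i j : ℕ) : Decidable (ltIn σ i j) :=
  inferInstanceAs (Decidable (σ.idxOf i < σ.idxOf j))

/-- Three orders in `D` whose restrictions to `{i,j,k}` are exactly the three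
cyclic patterns `i<j<k`, `j<k<i`, `k<i<j`. -/
def CyclicTriple (D : Set (List ℕ)) (i j k : ℕ) : Prop :=
  ∃ σ₁ ∈ D, ∃ σ₂ ∈ D, ∃ σ₃ ∈ D,
    (ltIn σ₁ i j ∧ ltIn σ₁ j k) ∧ (ltIn σ₂ j k ∧ ltIn σ₂ k i) ∧ (ltIn σ₃ k i ∧ ltIn σ₃ i j)

/-- `D` is cyclic: some three distinct alternatives and three orders of `D`
restrict to `{i,j,k}` as `{ijk, jki, kij}` or as `{kji, jik, ikj}`. -/
def IsCyclicDom (D : Set (List ℕ)) : Prop :=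
  ∃ i j k : ℕ, i ≠ j ∧ j ≠ k ∧ i ≠ k ∧ (CyclicTriple D i j k ∨ CyclicTriple D k j i)

/-- On the triple `i<j<k`, in every order of `D` the alternative `j` is never the worst. -/
def PeakCond (D : Set (List ℕ)) (i j k : ℕ) : Prop :=
  ∀ σ ∈ D, ¬ (ltIn σ j i ∧ ltIn σ j k)

/-- On the triple `i<j<k`, in every order of `D` the alternative `j` is never the best. -/
def PitCond (D : Set (List ℕ)) (i j k : ℕ) : Prop :=
  ∀ σ ∈ D, ¬ (ltIn σ i j ∧ ltIn σ k j)

/-- `D` is a peak-pit domain: every triple `i<j<k` in `[n]` satisfies the peak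
condition or the pit condition. -/
def IsPeakPit (n : ℕ) (D : Set (List ℕ)) : Prop :=
  ∀ i j k : ℕ, 1 ≤ i → i < j → j < k → k ≤ n → (PeakCond D i j k ∨ PitCond D i j k)

/-- The four symbols a casting can assign to a triple. -/
inductive Symb | peak | pit | right | left

/-- Membership of (the restriction of) `σ` in the four-element domain `D₃(s)` on
the triple `i<j<k`: for `∩`, `j` is not worst; for `∪`, `j` is not best; for `→`,
`k` is not middle; for `←`, `i` is not middle. -/
def TripleCond : Symb → List ℕ → ℕ → ℕ → ℕ → Prop
  | Symb.peak, σ, i, j, k => ¬ (ltIn σ j i ∧ ltIn σ j k)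
  | Symb.pit,  σ, i, j, k => ¬ (ltIn σ i j ∧ ltIn σ k j)
  | Symb.right, σ, i, j, k => ¬ ((ltIn σ i k ∧ ltIn σ k j) ∨ (ltIn σ j k ∧ ltIn σ k i))
  | Symb.left,  σ, i, j, k => ¬ ((ltIn σ j i ∧ ltIn σ i k) ∨ (ltIn σ k i ∧ ltIn σ i j))

/-- The domain `D(c)` of a casting `c`: all linear orders on `[n]` whose restriction
to every triple `i<j<k` lies in `D₃(c i j k)`. -/
def CastDomain (n : ℕ) (c : ℕ → ℕ → ℕ → Symb) : Set (List ℕ) :=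
  {σ | σ ∈ LinWords n ∧ ∀ i j k : ℕ, 1 ≤ i → i < j → j < k → k ≤ n → TripleCond (c i j k) σ i j k}

/-- The set of inversions of a word `σ`: pairs `(i,j)` of alternatives of `σ`
with `i < j` as integers and `j <_σ i`. -/
def InvPairs (σ : List ℕ) : Set (ℕ × ℕ) :=
  {p | p.1 ∈ σ ∧ p.2 ∈ σ ∧ p.1 < p.2 ∧ ltIn σ p.2 p.1}

/-- `τ` covers `σ` in the weak Bruhat order: `InvPairs τ` is `InvPairs σ` plus exactly one pair. -/
def Covers (τ σ : List ℕ) : Prop :=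
  ∃ p : ℕ × ℕ, p ∉ InvPairs σ ∧ InvPairs τ = insert p (InvPairs σ)

/-- Adjacency in the Bruhat graph. -/
def BruhatAdj (σ τ : List ℕ) : Prop := Covers τ σ ∨ Covers σ τ

/-- A path in the Bruhat graph from `σ` to `τ` all of whose vertices lie in `D`. -/
def PathIn (D : Set (List ℕ)) (σ τ : List ℕ) : Prop :=
  ∃ (m : ℕ) (f : ℕ → List ℕ), f 0 = σ ∧ f m = τ ∧
    (∀ t ≤ m, f t ∈ D) ∧ ∀ t < m, BruhatAdj (f t) (f (t + 1))

/-- `D` is semi-connected (ground set `[n]`): it contains the increasing order `α`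
and the decreasing order `ω` and a Bruhat path from `α` to `ω` inside `D`. -/
def SemiConnected (n : ℕ) (D : Set (List ℕ)) : Prop :=
  List.range' 1 n ∈ D ∧ (List.range' 1 n).reverse ∈ D ∧
    PathIn D (List.range' 1 n) (List.range' 1 n).reverse

/-- `D` is semi-connected on the ground set `X`. -/
def SemiConnectedOn (X : Finset ℕ) (D : Set (List ℕ)) : Prop :=
  X.sort (· ≤ ·) ∈ D ∧ (X.sort (· ≤ ·)).reverse ∈ D ∧
    PathIn D (X.sort (· ≤ ·)) (X.sort (· ≤ ·)).reverse

/-- `A` is an ideal of the order `σ`: a downward-closed (w.r.t. `<_σ`) set of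
alternatives of `σ`, i.e. an initial segment of the word `σ`. -/
def IsIdeal (σ : List ℕ) (A : Set ℕ) : Prop :=
  (∀ x ∈ A, x ∈ σ) ∧ ∀ x ∈ A, ∀ y ∈ σ, ltIn σ y x → y ∈ A

/-- The set system of all ideals of `σ`. -/
def IdSet (σ : List ℕ) : Set (Set ℕ) := {A | IsIdeal σ A}

/-- The convex hull of a set of naturals: the minimal integer interval containing it. -/
def hull (S : Set ℕ) : Set ℕ := {x | ∃ a ∈ S, ∃ b ∈ S, a ≤ x ∧ x ≤ b}

/-- `A` and `B` are separated: the convex hulls of `A \ B` and `B \ A` are disjoint. -/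
def Separated (A B : Set ℕ) : Prop := Disjoint (hull (A \ B)) (hull (B \ A))

/-- A separated set system: any two members are separated. -/
def SepSystem (𝒳 : Set (Set ℕ)) : Prop := ∀ A ∈ 𝒳, ∀ B ∈ 𝒳, Separated A B

/-- The concatenation `σ * τ` of a word on `[n]` with a word on `[n']`, the latter
shifted by `n`. -/
def concatWord (n : ℕ) (σ τ : List ℕ) : List ℕ := σ ++ τ.map (· + n)

/-- The concatenation `{σ * τ : σ ∈ D, τ ∈ D'}` of two domains. -/
def ConcatDomain (n : ℕ) (D D' : Set (List ℕ)) : Set (List ℕ) :=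
  {l | ∃ σ ∈ D, ∃ τ ∈ D', l = concatWord n σ τ}

/-- The simple-majority relation `i sm(ν) j` for an opinion `ν` on the finite domain `D`. -/
def SM (D : Finset (List ℕ)) (ν : List ℕ → ℕ) (i j : ℕ) : Prop :=
  (∑ σ ∈ D, if ltIn σ j i then ν σ else 0) > (∑ σ ∈ D, if ltIn σ i j then ν σ else 0)

/-- Fishburn's domain (the alternating scheme): for each triple `i<j<k`, if `j` is
even then `j` is not the worst of `{i,j,k}`, and if `j` is odd then `j` is not the best. -/
def Fishburn (n : ℕ) : Set (List ℕ) :=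
  {σ | σ ∈ LinWords n ∧ ∀ i j k : ℕ, 1 ≤ i → i < j → j < k → k ≤ n →
    (Even j → ¬ (ltIn σ j i ∧ ltIn σ j k)) ∧ (Odd j → ¬ (ltIn σ i j ∧ ltIn σ k j))}

/-- `γ n`: the maximum cardinality of a peak-pit domain in `L([n])`. -/
noncomputable def gamma (n : ℕ) : ℕ :=
  sSup {m | ∃ D : Set (List ℕ), D ⊆ LinWords n ∧ IsPeakPit n D ∧ D.ncard = m}


private lemma indexOf_range'_aux (n s a : ℕ) (h1 : s ≤ a) (h2 : a < s + n) :
    (List.range' s n).idxOf a = a - s := by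
  induction n generalizing s with
  | zero => omega
  | succ m ih =>
    rw [List.range'_succ]
    rcases eq_or_ne a s with rfl | h
    · simp
    · rw [List.idxOf_cons_ne _ (Ne.symm h), ih (s+1) (by omega) (by omega)]
      omega

private lemma indexOf_rev_range' (n a : ℕ) (h1 : 1 ≤ a) (h2 : a ≤ n) :
    (List.range' 1 n).reverse.idxOf a = n - a := by
  induction n with
  | zero => omega
  | succ m ih =>
    rw [List.range'_concat, List.reverse_append]
    simp only [List.reverse_singleton, List.singleton_append]
    rcases eq_or_ne a (1 + 1 * m) with rfl | h
    · rw [List.idxOf_cons_self]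
      omega
    · rw [List.idxOf_cons_ne _ (Ne.symm h), ih (by omega)]
      omega

private lemma ltIn_alpha {n a b : ℕ} (h1 : 1 ≤ a) (h2 : a < b) (h3 : b ≤ n) :
    ltIn (List.range' 1 n) a b := by
  unfold ltIn
  rw [indexOf_range'_aux n 1 a (by omega) (by omega),
    indexOf_range'_aux n 1 b (by omega) (by omega)]
  omega

private lemma ltIn_omega {n a b : ℕ} (h1 : 1 ≤ a) (h2 : a < b) (h3 : b ≤ n) :
    ltIn (List.range' 1 n).reverse b a := by
  unfold ltIn
  rw [indexOf_rev_range' n a (by omega) (by omega),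
    indexOf_rev_range' n b (by omega) (by omega)]
  omega

private lemma ltIn_tri {σ : List ℕ} {a b : ℕ} (ha : a ∈ σ) (hb : b ∈ σ) (hab : a ≠ b) :
    ltIn σ a b ∨ ltIn σ b a := by
  unfold ltIn
  rcases Nat.lt_trichotomy (σ.idxOf a) (σ.idxOf b) with h | h | h
  · exact Or.inl h
  · exact absurd ((List.idxOf_inj ha).1 h) hab
  · exact Or.inr h

private lemma mem_of_lin {n : ℕ} {σ : List ℕ} (hσ : σ ∈ LinWords n) {a : ℕ}
    (h1 : 1 ≤ a) (h2 : a ≤ n) : a ∈ σ := by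
  have : a ∈ List.range' 1 n := by
    rw [List.mem_range']
    exact ⟨a - 1, by omega, by omega⟩
  exact hσ.mem_iff.2 this

private lemma exists_symb (n : ℕ) (D : Set (List ℕ)) (hD : D ⊆ LinWords n)
    (hα : List.range' 1 n ∈ D) (hω : (List.range' 1 n).reverse ∈ D)
    (hCD : ¬ IsCyclicDom D) {i j k : ℕ}
    (h1 : 1 ≤ i) (h2 : i < j) (h3 : j < k) (h4 : k ≤ n) :
    ∃ s : Symb, ∀ σ ∈ D, TripleCond s σ i j k := by
  by_contra hc
  push_neg at hc
  obtain ⟨σp, hσp, hp⟩ := hc Symb.peak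
  obtain ⟨σq, hσq, hq⟩ := hc Symb.pit
  obtain ⟨σr, hσr, hr⟩ := hc Symb.right
  obtain ⟨σl, hσl, hl⟩ := hc Symb.left
  simp only [TripleCond, not_not] at hp hq hr hl
  have hik : i ≠ k := by omega
  have mk_ijk : ∀ σ₂ ∈ D, ∀ σ₃ ∈ D, (ltIn σ₂ j k ∧ ltIn σ₂ k i) →
      (ltIn σ₃ k i ∧ ltIn σ₃ i j) → CyclicTriple D i j k := by
    intro σ₂ hσ₂ σ₃ hσ₃ p2 p3
    exact ⟨_, hα, σ₂, hσ₂, σ₃, hσ₃,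
      ⟨ltIn_alpha (by omega) h2 (by omega), ltIn_alpha (by omega) h3 h4⟩, p2, p3⟩
  have mk_kji : ∀ σ₂ ∈ D, ∀ σ₃ ∈ D, (ltIn σ₂ j i ∧ ltIn σ₂ i k) →
      (ltIn σ₃ i k ∧ ltIn σ₃ k j) → CyclicTriple D k j i := by
    intro σ₂ hσ₂ σ₃ hσ₃ p2 p3
    exact ⟨_, hω, σ₂, hσ₂, σ₃, hσ₃,
      ⟨ltIn_omega (by omega) h3 h4, ltIn_omega h1 h2 (by omega)⟩, p2, p3⟩
  apply hCD
  refine ⟨i, j, k, by omega, by omega, hik, ?_⟩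
  rcases hr with h132r | h231r
  · rcases hl with h213l | h312l
    · exact Or.inr (mk_kji σl hσl σr hσr h213l h132r)
    · rcases ltIn_tri (mem_of_lin (hD hσp) h1 (by omega))
        (mem_of_lin (hD hσp) (by omega) h4) hik with hik' | hki'
      · exact Or.inr (mk_kji σp hσp σr hσr ⟨hp.1, hik'⟩ h132r)
      · exact Or.inl (mk_ijk σp hσp σl hσl ⟨hp.2, hki'⟩ h312l)
  · rcases hl with h213l | h312l
    · rcases ltIn_tri (mem_of_lin (hD hσq) h1 (by omega))
        (mem_of_lin (hD hσq) (by omega) h4) hik with hik' | hki'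
      · exact Or.inr (mk_kji σl hσl σq hσq h213l ⟨hik', hq.2⟩)
      · exact Or.inl (mk_ijk σr hσr σq hσq h231r ⟨hki', hq.1⟩)
    · exact Or.inl (mk_ijk σr hσr σl hσl h231r h312l)

/-- every Condorcet domain containing `α` and `ω` is contained in
`D(c)` for some casting `c`. -/
theorem statement_1 (n : ℕ) (D : Set (List ℕ)) (hD : D ⊆ LinWords n)
    (hα : List.range' 1 n ∈ D) (hω : (List.range' 1 n).reverse ∈ D)
    (hCD : ¬ IsCyclicDom D) :
    ∃ c : ℕ → ℕ → ℕ → Symb, D ⊆ CastDomain n c := by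
  have key : ∀ i j k : ℕ, ∃ s : Symb,
      1 ≤ i → i < j → j < k → k ≤ n → ∀ σ ∈ D, TripleCond s σ i j k := by
    intro i j k
    by_cases h : 1 ≤ i ∧ i < j ∧ j < k ∧ k ≤ n
    · obtain ⟨s, hs⟩ := exists_symb n D hD hα hω hCD h.1 h.2.1 h.2.2.1 h.2.2.2
      exact ⟨s, fun _ _ _ _ => hs⟩
    · exact ⟨Symb.peak, fun a b c d => absurd ⟨a, b, c, d⟩ h⟩
  choose c hc using key
  exact ⟨c, fun σ hσ => ⟨hD hσ, fun i j k a b c' d => hc i j k a b c' d σ hσ⟩⟩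
end

section
/- Let D ⊆ L([n]) be a Condorcet domain and let ν : D → ℤ₊ be a D-opinion whose total number of voters |ν| = Σ_{σ∈D} ν(σ) is odd. Then the simple-majority relation sm(ν) is a linear order on [n] (it is complete, asymmetric, and transitive). -/
/-- Auxiliary: elements of `[n]` belong to every word in `LinWords n`. -/
lemma aux_mem_lin {n i : ℕ} {σ : List ℕ} (hσ : σ ∈ LinWords n) (h1 : 1 ≤ i) (h2 : i ≤ n) :
    i ∈ σ := by
  have hp : σ.Perm (List.range' 1 n) := hσ
  exact hp.mem_iff.2 (List.mem_range'_1.2 ⟨h1, by omega⟩)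

/-- Auxiliary: distinct elements of a word have distinct indices. -/
lemma aux_idx_ne {σ : List ℕ} {i j : ℕ} (hi : i ∈ σ) (hj : j ∈ σ) (hij : i ≠ j) :
    σ.idxOf i ≠ σ.idxOf j := by
  intro h
  have h1 : σ.idxOf i < σ.length := List.idxOf_lt_length_iff.2 hi
  have h2 : σ.idxOf j < σ.length := List.idxOf_lt_length_iff.2 hj
  have e1 : σ[σ.idxOf i] = i := List.getElem_idxOf h1
  have e2 : σ[σ.idxOf j] = j := List.getElem_idxOf h2
  exact hij (by rw [← e1, ← e2]; congr 1)

/-- Auxiliary: split a pairwise-comparison sum into the three pattern sums. -/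
lemma aux_sum_split (D : Finset (List ℕ)) (ν : List ℕ → ℕ) (x y z : ℕ)
    (h : ∀ σ ∈ D, σ.idxOf x ≠ σ.idxOf y ∧ σ.idxOf y ≠ σ.idxOf z ∧
      σ.idxOf x ≠ σ.idxOf z) :
    (∑ σ ∈ D, if ltIn σ x y then ν σ else 0) =
      ((∑ σ ∈ D, if ltIn σ x y ∧ ltIn σ y z then ν σ else 0)
      + (∑ σ ∈ D, if ltIn σ x z ∧ ltIn σ z y then ν σ else 0))
      + (∑ σ ∈ D, if ltIn σ z x ∧ ltIn σ x y then ν σ else 0) := by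
  rw [← Finset.sum_add_distrib, ← Finset.sum_add_distrib]
  refine Finset.sum_congr rfl fun σ hσ => ?_
  obtain ⟨h1, h2, h3⟩ := h σ hσ
  split_ifs <;> simp only [ltIn] at * <;> omega

/-- for a Condorcet domain `D` and a `D`-opinion `ν` with an odd total
number of voters, the simple-majority relation `sm(ν)` is a linear order on `[n]`:
complete, asymmetric and transitive. -/
theorem statement_2 (n : ℕ) (D : Finset (List ℕ)) (hD : ↑D ⊆ LinWords n)
    (hCD : ¬ IsCyclicDom ↑D) (ν : List ℕ → ℕ) (hodd : Odd (∑ σ ∈ D, ν σ)) :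
    (∀ i ∈ Finset.Icc 1 n, ∀ j ∈ Finset.Icc 1 n, i ≠ j → (SM D ν i j ∨ SM D ν j i)) ∧
    (∀ i j : ℕ, SM D ν i j → ¬ SM D ν j i) ∧
    (∀ i ∈ Finset.Icc 1 n, ∀ j ∈ Finset.Icc 1 n, ∀ k ∈ Finset.Icc 1 n,
      SM D ν i j → SM D ν j k → SM D ν i k) := by
  classical
  have hmemD : ∀ σ ∈ D, σ ∈ LinWords n := fun σ hσ => hD (Finset.mem_coe.mpr hσ)
  have hne : ∀ i ∈ Finset.Icc 1 n, ∀ j ∈ Finset.Icc 1 n, i ≠ j → ∀ σ ∈ D,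
      σ.idxOf i ≠ σ.idxOf j := by
    intro i hi j hj hij σ hσ
    simp only [Finset.mem_Icc] at hi hj
    exact aux_idx_ne (aux_mem_lin (hmemD σ hσ) hi.1 hi.2)
      (aux_mem_lin (hmemD σ hσ) hj.1 hj.2) hij
  have hirr : ∀ i, ¬ SM D ν i i := fun i h => lt_irrefl _ h
  have hasym : ∀ i j : ℕ, SM D ν i j → ¬ SM D ν j i := fun i j h1 h2 => lt_asymm h1 h2
  refine ⟨?_, hasym, ?_⟩
  · -- completeness
    intro i hi j hj hij
    have hsum : (∑ σ ∈ D, if ltIn σ j i then ν σ else 0)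
        + (∑ σ ∈ D, if ltIn σ i j then ν σ else 0) = ∑ σ ∈ D, ν σ := by
      rw [← Finset.sum_add_distrib]
      refine Finset.sum_congr rfl fun σ hσ => ?_
      have h1 := hne i hi j hj hij σ hσ
      split_ifs <;> simp only [ltIn] at * <;> omega
    obtain ⟨m, hm⟩ := hodd
    simp only [SM]
    omega
  · -- transitivity
    intro i hi j hj k hk hij hjk
    have hij' : i ≠ j := fun h => hirr i (h ▸ hij)
    have hjk' : j ≠ k := fun h => hirr j (h ▸ hjk)
    have hik' : i ≠ k := fun h => hasym j k hjk (h ▸ hij)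
    by_contra hik
    -- acyclicity on the triple (i,j,k)
    have hc1 : ¬ CyclicTriple ↑D i j k := fun hc =>
      hCD ⟨i, j, k, hij', hjk', hik', Or.inl hc⟩
    have hc2 : ¬ CyclicTriple ↑D k j i := fun hc =>
      hCD ⟨i, j, k, hij', hjk', hik', Or.inr hc⟩
    -- one of the weights a, d, e vanishes
    have hz1 : (∑ σ ∈ D, if ltIn σ i j ∧ ltIn σ j k then ν σ else 0) = 0 ∨
        (∑ σ ∈ D, if ltIn σ j k ∧ ltIn σ k i then ν σ else 0) = 0 ∨
        (∑ σ ∈ D, if ltIn σ k i ∧ ltIn σ i j then ν σ else 0) = 0 := by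
      by_cases ha : ∃ σ ∈ D, ltIn σ i j ∧ ltIn σ j k
      · by_cases hd : ∃ σ ∈ D, ltIn σ j k ∧ ltIn σ k i
        · by_cases he : ∃ σ ∈ D, ltIn σ k i ∧ ltIn σ i j
          · obtain ⟨σ₁, h₁, p₁⟩ := ha
            obtain ⟨σ₂, h₂, p₂⟩ := hd
            obtain ⟨σ₃, h₃, p₃⟩ := he
            exact absurd ⟨σ₁, Finset.mem_coe.mpr h₁, σ₂, Finset.mem_coe.mpr h₂,
              σ₃, Finset.mem_coe.mpr h₃, p₁, p₂, p₃⟩ hc1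
          · push_neg at he
            exact Or.inr (Or.inr (Finset.sum_eq_zero fun σ hσ =>
              if_neg (fun hp => (he σ hσ hp.1) hp.2)))
        · push_neg at hd
          exact Or.inr (Or.inl (Finset.sum_eq_zero fun σ hσ =>
            if_neg (fun hp => (hd σ hσ hp.1) hp.2)))
      · push_neg at ha
        exact Or.inl (Finset.sum_eq_zero fun σ hσ =>
          if_neg (fun hp => (ha σ hσ hp.1) hp.2))
    -- one of the weights f, c, b vanishes
    have hz2 : (∑ σ ∈ D, if ltIn σ k j ∧ ltIn σ j i then ν σ else 0) = 0 ∨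
        (∑ σ ∈ D, if ltIn σ j i ∧ ltIn σ i k then ν σ else 0) = 0 ∨
        (∑ σ ∈ D, if ltIn σ i k ∧ ltIn σ k j then ν σ else 0) = 0 := by
      by_cases hf : ∃ σ ∈ D, ltIn σ k j ∧ ltIn σ j i
      · by_cases hcc : ∃ σ ∈ D, ltIn σ j i ∧ ltIn σ i k
        · by_cases hb : ∃ σ ∈ D, ltIn σ i k ∧ ltIn σ k j
          · obtain ⟨σ₁, h₁, p₁⟩ := hf
            obtain ⟨σ₂, h₂, p₂⟩ := hcc
            obtain ⟨σ₃, h₃, p₃⟩ := hb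
            exact absurd ⟨σ₁, Finset.mem_coe.mpr h₁, σ₂, Finset.mem_coe.mpr h₂,
              σ₃, Finset.mem_coe.mpr h₃, p₁, p₂, p₃⟩ hc2
          · push_neg at hb
            exact Or.inr (Or.inr (Finset.sum_eq_zero fun σ hσ =>
              if_neg (fun hp => (hb σ hσ hp.1) hp.2)))
        · push_neg at hcc
          exact Or.inr (Or.inl (Finset.sum_eq_zero fun σ hσ =>
            if_neg (fun hp => (hcc σ hσ hp.1) hp.2)))
      · push_neg at hf
        exact Or.inl (Finset.sum_eq_zero fun σ hσ =>
          if_neg (fun hp => (hf σ hσ hp.1) hp.2))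
    -- distinct-index hypotheses for the splitting lemma
    have hJI : ∀ σ ∈ D, σ.idxOf j ≠ σ.idxOf i ∧ σ.idxOf i ≠ σ.idxOf k ∧
        σ.idxOf j ≠ σ.idxOf k := fun σ hσ =>
      ⟨hne j hj i hi hij'.symm σ hσ, hne i hi k hk hik' σ hσ, hne j hj k hk hjk' σ hσ⟩
    have e1 := aux_sum_split D ν j i k (fun σ hσ => ⟨(hJI σ hσ).1, (hJI σ hσ).2.1, (hJI σ hσ).2.2⟩)
    have e2 := aux_sum_split D ν i j k (fun σ hσ => ⟨((hJI σ hσ).1).symm, (hJI σ hσ).2.2, (hJI σ hσ).2.1⟩)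
    have e3 := aux_sum_split D ν k j i (fun σ hσ => ⟨((hJI σ hσ).2.2).symm, (hJI σ hσ).1, ((hJI σ hσ).2.1).symm⟩)
    have e4 := aux_sum_split D ν j k i (fun σ hσ => ⟨(hJI σ hσ).2.2, ((hJI σ hσ).2.1).symm, (hJI σ hσ).1⟩)
    have e5 := aux_sum_split D ν k i j (fun σ hσ => ⟨((hJI σ hσ).2.1).symm, ((hJI σ hσ).1).symm, ((hJI σ hσ).2.2).symm⟩)
    have e6 := aux_sum_split D ν i k j (fun σ hσ => ⟨(hJI σ hσ).2.1, ((hJI σ hσ).2.2).symm, ((hJI σ hσ).1).symm⟩)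
    simp only [SM] at hij hjk hik
    omega
end

section
/- Semi-connectedness is preserved under deleting an alternative: if D ⊆ L([n]) is semi-connected and i ∈ [n], then the set of restrictions {σ restricted to [n]\{i} : σ ∈ D} is a semi-connected set of linear orders on [n]\{i} (with respect to the natural order 1<2<...<i-1<i+1<...<n, its reversal, and the Bruhat graph on linear orders of [n]\{i}). -/
/-! ### Auxiliary lemmas for Statement 6 -/

lemma aux_ltIn_sublist : ∀ {l' l : List ℕ}, l'.Sublist l → l.Nodup → ∀ a b, a ∈ l' → b ∈ l' →
    (ltIn l' a b ↔ ltIn l a b) := by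
  intro l' l h
  induction h with
  | slnil => intro _ a b ha _; simp at ha
  | @cons l₁ l₂ c h ih =>
    intro hnd a b ha hb
    have hnd2 : l₂.Nodup := hnd.of_cons
    have hcl : c ∉ l₂ := (List.nodup_cons.1 hnd).1
    have hac : c ≠ a := fun e => hcl (e ▸ h.subset ha)
    have hbc : c ≠ b := fun e => hcl (e ▸ h.subset hb)
    rw [ih hnd2 a b ha hb]
    unfold ltIn
    rw [List.idxOf_cons_ne _ hac, List.idxOf_cons_ne _ hbc]
    exact (Nat.succ_lt_succ_iff).symm
  | @cons_cons l₁ l₂ c h ih =>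
    intro hnd a b ha hb
    have hnd2 : l₂.Nodup := hnd.of_cons
    by_cases hac : a = c
    · subst hac
      by_cases hbc : b = a
      · subst hbc; simp [ltIn]
      · unfold ltIn
        rw [List.idxOf_cons_self, List.idxOf_cons_self,
          List.idxOf_cons_ne _ (Ne.symm hbc), List.idxOf_cons_ne _ (Ne.symm hbc)]
        simp
    · by_cases hbc : b = c
      · subst hbc
        unfold ltIn
        rw [List.idxOf_cons_self, List.idxOf_cons_self,
          List.idxOf_cons_ne _ (Ne.symm hac), List.idxOf_cons_ne _ (Ne.symm hac)]
        simp
      · have ha' : a ∈ l₁ := by cases ha with | head => exact absurd rfl hac | tail _ h => exact h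
        have hb' : b ∈ l₁ := by cases hb with | head => exact absurd rfl hbc | tail _ h => exact h
        unfold ltIn
        rw [List.idxOf_cons_ne _ (Ne.symm hac), List.idxOf_cons_ne _ (Ne.symm hac),
          List.idxOf_cons_ne _ (Ne.symm hbc), List.idxOf_cons_ne _ (Ne.symm hbc)]
        rw [Nat.succ_lt_succ_iff, Nat.succ_lt_succ_iff]
        exact ih hnd2 a b ha' hb'

lemma aux_ltIn_not_iff (σ : List ℕ) {a b : ℕ} (ha : a ∈ σ) (hb : b ∈ σ)
    (hne : a ≠ b) : ¬ ltIn σ b a ↔ ltIn σ a b := by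
  have h : σ.idxOf a ≠ σ.idxOf b := fun e => hne ((List.idxOf_inj ha).1 e)
  unfold ltIn
  omega

lemma aux_eq_of_ltIn : ∀ (σ τ : List ℕ), σ.Nodup → τ.Nodup → (∀ x, x ∈ σ ↔ x ∈ τ) →
    (∀ a b, a ∈ σ → b ∈ σ → (ltIn σ a b ↔ ltIn τ a b)) → σ = τ := by
  intro σ
  induction σ with
  | nil =>
    intro τ _ _ hmem _
    cases τ with
    | nil => rfl
    | cons c t => exact absurd ((hmem c).2 (.head _)) (by simp)
  | cons a s ih =>
    intro τ hσ hτ hmem hlt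
    obtain ⟨c, t, rfl⟩ : ∃ c t, τ = c :: t := by
      cases τ with
      | nil => exact absurd ((hmem a).1 (.head _)) (by simp)
      | cons c t => exact ⟨c, t, rfl⟩
    have hca : c = a := by
      by_contra hne
      have hcσ : c ∈ a :: s := (hmem c).2 (.head _)
      have h1 : ltIn (c :: t) c a := by
        unfold ltIn
        rw [List.idxOf_cons_self, List.idxOf_cons_ne _ hne]
        exact Nat.succ_pos _
      have h2 : ltIn (a :: s) c a := (hlt c a hcσ (.head _)).2 h1
      unfold ltIn at h2
      rw [List.idxOf_cons_self] at h2
      omega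
    subst hca
    have has : c ∉ s := (List.nodup_cons.1 hσ).1
    have hct : c ∉ t := (List.nodup_cons.1 hτ).1
    congr 1
    refine ih t hσ.of_cons hτ.of_cons ?_ ?_
    · intro x
      constructor
      · intro hx
        have hxc : x ≠ c := fun e => has (e ▸ hx)
        have := (hmem x).1 (.tail _ hx)
        cases this with
        | head => exact absurd rfl hxc
        | tail _ h => exact h
      · intro hx
        have hxc : x ≠ c := fun e => hct (e ▸ hx)
        have := (hmem x).2 (.tail _ hx)
        cases this with
        | head => exact absurd rfl hxc
        | tail _ h => exact h
    · intro x y hx hy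
      have hxc : x ≠ c := fun e => has (e ▸ hx)
      have hyc : y ≠ c := fun e => has (e ▸ hy)
      have h := hlt x y (.tail _ hx) (.tail _ hy)
      unfold ltIn at h ⊢
      rw [List.idxOf_cons_ne _ (Ne.symm hxc), List.idxOf_cons_ne _ (Ne.symm hyc),
        List.idxOf_cons_ne _ (Ne.symm hxc), List.idxOf_cons_ne _ (Ne.symm hyc)] at h
      simpa [Nat.succ_lt_succ_iff] using h

lemma aux_eq_of_invPairs (σ τ : List ℕ) (hσ : σ.Nodup) (hτ : τ.Nodup)
    (hmem : ∀ x, x ∈ σ ↔ x ∈ τ) (h : InvPairs σ = InvPairs τ) : σ = τ := by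
  refine aux_eq_of_ltIn σ τ hσ hτ hmem ?_
  intro a b ha hb
  have hbτ : b ∈ τ := (hmem b).1 hb
  have haτ : a ∈ τ := (hmem a).1 ha
  rcases lt_trichotomy a b with hab | hab | hab
  · have h1 : ((a, b) ∈ InvPairs σ) ↔ ((a, b) ∈ InvPairs τ) := by rw [h]
    simp only [InvPairs, Set.mem_setOf_eq] at h1
    rw [← aux_ltIn_not_iff σ ha hb hab.ne, ← aux_ltIn_not_iff τ haτ hbτ hab.ne]
    simp only [ha, hb, haτ, hbτ, hab, true_and] at h1
    exact not_congr h1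
  · subst hab; simp [ltIn]
  · have h1 : ((b, a) ∈ InvPairs σ) ↔ ((b, a) ∈ InvPairs τ) := by rw [h]
    simp only [InvPairs, Set.mem_setOf_eq] at h1
    simpa [ha, hb, haτ, hbτ, hab] using h1

lemma aux_invPairs_filter (σ : List ℕ) (hσ : σ.Nodup) (i : ℕ) :
    InvPairs (σ.filter (fun x => decide (x ≠ i))) =
      {p ∈ InvPairs σ | p.1 ≠ i ∧ p.2 ≠ i} := by
  have hsub := List.filter_sublist (p := fun x => decide (x ≠ i)) (l := σ)
  ext p
  simp only [InvPairs, Set.mem_setOf_eq, Set.mem_sep_iff, List.mem_filter,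
    decide_eq_true_eq]
  constructor
  · rintro ⟨⟨h1, h1'⟩, ⟨h2, h2'⟩, h3, h4⟩
    refine ⟨⟨h1, h2, h3, ?_⟩, h1', h2'⟩
    exact (aux_ltIn_sublist hsub hσ _ _ (List.mem_filter.2 ⟨h2, by simp [h2']⟩)
      (List.mem_filter.2 ⟨h1, by simp [h1']⟩)).1 h4
  · rintro ⟨⟨h1, h2, h3, h4⟩, h1', h2'⟩
    refine ⟨⟨h1, h1'⟩, ⟨h2, h2'⟩, h3, ?_⟩
    exact (aux_ltIn_sublist hsub hσ _ _ (List.mem_filter.2 ⟨h2, by simp [h2']⟩)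
      (List.mem_filter.2 ⟨h1, by simp [h1']⟩)).2 h4

lemma aux_covers_filter (i : ℕ) (σ τ : List ℕ) (hσ : σ.Nodup) (hτ : τ.Nodup)
    (hmem : ∀ x, x ∈ σ ↔ x ∈ τ) (h : Covers τ σ) :
    σ.filter (fun x => decide (x ≠ i)) = τ.filter (fun x => decide (x ≠ i)) ∨
    Covers (τ.filter (fun x => decide (x ≠ i))) (σ.filter (fun x => decide (x ≠ i))) := by
  obtain ⟨p, hp, heq⟩ := h
  by_cases hpi : p.1 ≠ i ∧ p.2 ≠ i
  · right
    refine ⟨p, ?_, ?_⟩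
    · rw [aux_invPairs_filter σ hσ i]
      exact fun h => hp h.1
    · rw [aux_invPairs_filter τ hτ i, aux_invPairs_filter σ hσ i, heq]
      ext q
      simp only [Set.mem_sep_iff, Set.mem_insert_iff]
      constructor
      · rintro ⟨hq | hq, hq'⟩
        · exact Or.inl hq
        · exact Or.inr ⟨hq, hq'⟩
      · rintro (rfl | ⟨hq, hq'⟩)
        · exact ⟨Or.inl rfl, hpi⟩
        · exact ⟨Or.inr hq, hq'⟩
  · left
    apply aux_eq_of_invPairs
    · exact hσ.filter _
    · exact hτ.filter _
    · intro x; simp only [List.mem_filter, decide_eq_true_eq, hmem x]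
    · rw [aux_invPairs_filter σ hσ i, aux_invPairs_filter τ hτ i, heq]
      ext q
      simp only [Set.mem_sep_iff, Set.mem_insert_iff]
      constructor
      · rintro ⟨hq, hq'⟩; exact ⟨Or.inr hq, hq'⟩
      · rintro ⟨rfl | hq, hq'⟩
        · exact absurd hq' hpi
        · exact ⟨hq, hq'⟩

lemma aux_sort_filter_erase (X : Finset ℕ) (i : ℕ) :
    (X.sort (· ≤ ·)).filter (fun x => decide (x ≠ i)) = (X.erase i).sort (· ≤ ·) := by
  refine (fun hp h1 h2 => List.Perm.eq_of_pairwise' (r := ((· ≤ ·) : ℕ → ℕ → Prop)) h1 h2 hp) ?_ ?_ ?_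
  · rw [List.perm_ext_iff_of_nodup ((Finset.sort_nodup _ _).filter _) (Finset.sort_nodup _ _)]
    intro x
    simp [List.mem_filter, Finset.mem_sort, Finset.mem_erase, and_comm]
  · exact (Finset.pairwise_sort _ _).sublist List.filter_sublist
  · exact Finset.pairwise_sort _ _

lemma aux_pathIn_refl {D : Set (List ℕ)} {σ : List ℕ} (h : σ ∈ D) : PathIn D σ σ :=
  ⟨0, fun _ => σ, rfl, rfl, fun _ _ => h, fun t ht => by omega⟩

lemma aux_pathIn_single {D : Set (List ℕ)} {σ τ : List ℕ} (hσ : σ ∈ D) (hτ : τ ∈ D)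
    (h : BruhatAdj σ τ) : PathIn D σ τ := by
  refine ⟨1, fun t => if t = 0 then σ else τ, by simp, by simp, ?_, ?_⟩
  · intro t _; by_cases ht : t = 0 <;> simp [ht, hσ, hτ]
  · intro t ht
    have : t = 0 := by omega
    subst this; simpa using h

lemma aux_pathIn_trans {D : Set (List ℕ)} {σ τ ρ : List ℕ} (h1 : PathIn D σ τ)
    (h2 : PathIn D τ ρ) : PathIn D σ ρ := by
  obtain ⟨m1, f, hf0, hfm, hfD, hfA⟩ := h1
  obtain ⟨m2, g, hg0, hgm, hgD, hgA⟩ := h2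
  refine ⟨m1 + m2, fun t => if t ≤ m1 then f t else g (t - m1), by simp [hf0], ?_, ?_, ?_⟩
  · rcases Nat.eq_zero_or_pos m2 with h | h
    · subst h
      simp only [Nat.add_zero, le_refl, if_pos]
      rw [hfm, ← hg0, hgm]
    · have hle : ¬ (m1 + m2 ≤ m1) := by omega
      simp only [if_neg hle, Nat.add_sub_cancel_left, hgm]
  · intro t ht
    by_cases h : t ≤ m1
    · simp only [if_pos h]; exact hfD t h
    · simp only [if_neg h]; exact hgD (t - m1) (by omega)
  · intro t ht
    rcases lt_trichotomy t m1 with h | h | h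
    · have h1 : t ≤ m1 := le_of_lt h
      have h2 : t + 1 ≤ m1 := h
      simp only [if_pos h1, if_pos h2]
      exact hfA t h
    · subst h
      have h2 : ¬ (t + 1 ≤ t) := by omega
      simp only [if_pos le_rfl, if_neg h2]
      have h3 : t + 1 - t = 1 := by omega
      rw [h3, hfm, ← hg0]
      exact hgA 0 (by omega)
    · have h1 : ¬ (t ≤ m1) := by omega
      have h2 : ¬ (t + 1 ≤ m1) := by omega
      simp only [if_neg h1, if_neg h2]
      have h3 : t + 1 - m1 = (t - m1) + 1 := by omega
      rw [h3]
      exact hgA (t - m1) (by omega)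

/-- semi-connectedness is preserved under deleting an alternative `i`:
the set of restrictions of a semi-connected `D ⊆ L([n])` to `[n] \ {i}` is a
semi-connected set of linear orders on `[n] \ {i}`. -/
theorem statement_6 (n i : ℕ) (hi : i ∈ Finset.Icc 1 n) (D : Set (List ℕ))
    (hD : D ⊆ LinWordsOn (Finset.Icc 1 n))
    (hsc : SemiConnectedOn (Finset.Icc 1 n) D) :
    ((fun l : List ℕ => l.filter (fun x => decide (x ≠ i))) '' D)
        ⊆ LinWordsOn ((Finset.Icc 1 n).erase i) ∧
    SemiConnectedOn ((Finset.Icc 1 n).erase i)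
      ((fun l : List ℕ => l.filter (fun x => decide (x ≠ i))) '' D) := by
  obtain ⟨hα, hω, hpath⟩ := hsc
  set X := Finset.Icc 1 n with hX
  set p : ℕ → Bool := fun x => decide (x ≠ i) with hp
  set r : List ℕ → List ℕ := fun l => l.filter p with hr
  have hnod : ∀ σ ∈ D, σ.Nodup := fun σ hσ =>
    ((hD hσ).nodup_iff).2 (Finset.sort_nodup _ _)
  have hmemD : ∀ σ ∈ D, ∀ τ ∈ D, ∀ x, x ∈ σ ↔ x ∈ τ := by
    intro σ hσ τ hτ x
    exact ((hD hσ).mem_iff).trans ((hD hτ).mem_iff).symm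
  have himg : ∀ σ ∈ D, r σ ∈ LinWordsOn (X.erase i) := by
    intro σ hσ
    have h1 : (r σ).Perm ((X.sort (· ≤ ·)).filter p) := (hD hσ).filter p
    rwa [aux_sort_filter_erase X i] at h1
  have hsub : (r '' D) ⊆ LinWordsOn (X.erase i) := by
    rintro l ⟨σ, hσ, rfl⟩
    exact himg σ hσ
  have hαmem : (X.erase i).sort (· ≤ ·) ∈ r '' D :=
    ⟨X.sort (· ≤ ·), hα, aux_sort_filter_erase X i⟩
  have hωmem : ((X.erase i).sort (· ≤ ·)).reverse ∈ r '' D := by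
    refine ⟨(X.sort (· ≤ ·)).reverse, hω, ?_⟩
    show ((X.sort (· ≤ ·)).reverse).filter p = _
    rw [List.filter_reverse, aux_sort_filter_erase X i]
  refine ⟨hsub, hαmem, hωmem, ?_⟩
  obtain ⟨m, f, hf0, hfm, hfD, hfA⟩ := hpath
  have key : ∀ t ≤ m, PathIn (r '' D) (r (f 0)) (r (f t)) := by
    intro t
    induction t with
    | zero => intro _; exact aux_pathIn_refl (Set.mem_image_of_mem r (hfD 0 (Nat.zero_le m)))
    | succ t ih =>
      intro ht
      have h1 := ih (by omega)
      have htD : f t ∈ D := hfD t (by omega)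
      have ht1D : f (t + 1) ∈ D := hfD (t + 1) ht
      have hadj := hfA t (by omega)
      have hstep : r (f t) = r (f (t + 1)) ∨ BruhatAdj (r (f t)) (r (f (t + 1))) := by
        rcases hadj with hc | hc
        · rcases aux_covers_filter i (f t) (f (t + 1)) (hnod _ htD) (hnod _ ht1D)
            (hmemD _ htD _ ht1D) hc with he | hc'
          · exact Or.inl he
          · exact Or.inr (Or.inl hc')
        · rcases aux_covers_filter i (f (t + 1)) (f t) (hnod _ ht1D) (hnod _ htD)
            (hmemD _ ht1D _ htD) hc with he | hc'
          · exact Or.inl he.symm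
          · exact Or.inr (Or.inr hc')
      rcases hstep with he | hadj'
      · rwa [← he]
      · exact aux_pathIn_trans h1 (aux_pathIn_single (Set.mem_image_of_mem r htD)
          (Set.mem_image_of_mem r ht1D) hadj')
  have h := key m le_rfl
  rw [hf0, hfm] at h
  have e1 : r (X.sort (· ≤ ·)) = (X.erase i).sort (· ≤ ·) := aux_sort_filter_erase X i
  have e2 : r ((X.sort (· ≤ ·)).reverse) = ((X.erase i).sort (· ≤ ·)).reverse := by
    show ((X.sort (· ≤ ·)).reverse).filter p = _
    rw [List.filter_reverse, aux_sort_filter_erase X i]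
  rwa [e1, e2] at h
end

section
/- If D ⊆ L([n]) is a peak-pit domain, then the set-system Id(D) = ⋃_{σ∈D} Id(σ) of all ideals of members of D is separated: any two of its members A, B are such that the convex hulls (minimal integer intervals containing) A\B and B\A are disjoint. -/
lemma ltIn_trichot {σ : List ℕ} {x y : ℕ} (hx : x ∈ σ) (hy : y ∈ σ) (hne : x ≠ y) :
    ltIn σ x y ∨ ltIn σ y x := by
  rcases Nat.lt_trichotomy (σ.idxOf x) (σ.idxOf y) with h | h | h
  · exact Or.inl h
  · exact absurd ((List.idxOf_inj hx).1 h) hne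
  · exact Or.inr h

lemma key_triple {n : ℕ} {D : Set (List ℕ)} (hD : D ⊆ LinWords n)
    {σ τ : List ℕ} (hσ : σ ∈ D) (hτ : τ ∈ D) {A B : Set ℕ}
    (hA : IsIdeal σ A) (hB : IsIdeal τ B) {i j k : ℕ}
    (hij : i < j) (hjk : j < k)
    (hi : i ∈ A \ B) (hj : j ∈ B \ A) (hk : k ∈ A \ B)
    (hpp : IsPeakPit n D) : False := by
  have hperm := hD hσ
  have hperm' := hD hτ
  have memσ : ∀ x, x ∈ σ ↔ x ∈ List.range' 1 n := fun x => hperm.mem_iff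
  have memτ : ∀ x, x ∈ τ ↔ x ∈ List.range' 1 n := fun x => hperm'.mem_iff
  have hiσ : i ∈ σ := hA.1 i hi.1
  have hkσ : k ∈ σ := hA.1 k hk.1
  have hjτ : j ∈ τ := hB.1 j hj.1
  have hjσ : j ∈ σ := (memσ j).2 ((memτ j).1 hjτ)
  have hiτ : i ∈ τ := (memτ i).2 ((memσ i).1 hiσ)
  have hkτ : k ∈ τ := (memτ k).2 ((memσ k).1 hkσ)
  -- in σ, j comes after i and k (else j ∈ A)
  have h1 : ltIn σ i j := by
    rcases ltIn_trichot hiσ hjσ hij.ne with h | h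
    · exact h
    · exact absurd (hA.2 i hi.1 j hjσ h) hj.2
  have h2 : ltIn σ k j := by
    rcases ltIn_trichot hkσ hjσ hjk.ne' with h | h
    · exact h
    · exact absurd (hA.2 k hk.1 j hjσ h) hj.2
  -- in τ, j comes before i and k
  have h3 : ltIn τ j i := by
    rcases ltIn_trichot hjτ hiτ hij.ne' with h | h
    · exact h
    · exact absurd (hB.2 j hj.1 i hiτ h) hi.2
  have h4 : ltIn τ j k := by
    rcases ltIn_trichot hjτ hkτ hjk.ne with h | h
    · exact h
    · exact absurd (hB.2 j hj.1 k hkτ h) hk.2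
  have hir := (List.mem_range'_1.1 ((memσ i).1 hiσ))
  have hkr := (List.mem_range'_1.1 ((memσ k).1 hkσ))
  rcases hpp i j k hir.1 hij hjk (by omega) with hp | hp
  · exact hp τ hτ ⟨h3, h4⟩
  · exact hp σ hσ ⟨h1, h2⟩

/-- if `D` is a peak-pit domain then the set system `Id(D)` of all
ideals of members of `D` is separated. -/
theorem statement_8 (n : ℕ) (D : Set (List ℕ)) (hD : D ⊆ LinWords n)
    (hpp : IsPeakPit n D) :
    SepSystem {A : Set ℕ | ∃ σ ∈ D, IsIdeal σ A} := by
  rintro A ⟨σ, hσ, hA⟩ B ⟨τ, hτ, hB⟩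
  rw [Separated, Set.disjoint_left]
  rintro x ⟨a₁, ha₁, a₂, ha₂, ha₁x, hxa₂⟩ ⟨b₁, hb₁, b₂, hb₂, hb₁x, hxb₂⟩
  have hne1 : a₁ ≠ b₁ := fun h => hb₁.2 (h ▸ ha₁.1)
  have hne2 : b₁ ≠ a₂ := fun h => hb₁.2 (h ▸ ha₂.1)
  have hne3 : a₁ ≠ b₂ := fun h => hb₂.2 (h ▸ ha₁.1)
  rcases Nat.lt_or_ge a₁ b₁ with h | h
  · -- a₁ < b₁ ≤ x ≤ a₂, b₁ ≠ a₂ so triple a₁ < b₁ < a₂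
    exact key_triple hD hσ hτ hA hB h (lt_of_le_of_ne (hb₁x.trans hxa₂) hne2)
      ha₁ hb₁ ha₂ hpp
  · -- b₁ < a₁ (since ≠), a₁ ≤ x ≤ b₂, a₁ ≠ b₂ so triple b₁ < a₁ < b₂
    have hlt : b₁ < a₁ := lt_of_le_of_ne h (Ne.symm hne1)
    exact key_triple hD hτ hσ hB hA hlt (lt_of_le_of_ne (ha₁x.trans hxb₂) hne3)
      hb₁ ha₁ hb₂ (fun i j k h1 h2 h3 h4 => (hpp i j k h1 h2 h3 h4))
end

section
/- For two linear orders σ, τ ∈ L([n]), the set-system Id(σ) ∪ Id(τ) is separated if and only if for each triple i<j<k, the restrictions of σ and τ to {i,j,k} simultaneously satisfy the peak condition (j is not the worst in either restriction) or simultaneously satisfy the pit condition (j is not the best in either restriction). -/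

lemma ltIn_trans {ρ : List ℕ} {a b c : ℕ} (h1 : ltIn ρ a b) (h2 : ltIn ρ b c) : ltIn ρ a c :=
  Nat.lt_trans h1 h2

lemma ltIn_asymm {ρ : List ℕ} {a b : ℕ} (h1 : ltIn ρ a b) (h2 : ltIn ρ b a) : False :=
  Nat.lt_asymm h1 h2

lemma ltIn_irrefl (ρ : List ℕ) (a : ℕ) : ¬ ltIn ρ a a := Nat.lt_irrefl _

lemma lin_mem_iff {n : ℕ} {ρ : List ℕ} (hρ : ρ ∈ LinWords n) {x : ℕ} :
    x ∈ ρ ↔ 1 ≤ x ∧ x ≤ n := by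
  rw [hρ.mem_iff, List.mem_range'_1]; omega

lemma ideal_lt {ρ : List ℕ} {A : Set ℕ} (hA : IsIdeal ρ A) {a b : ℕ}
    (ha : a ∈ A) (hb : b ∈ ρ) (hbA : b ∉ A) : ltIn ρ a b := by
  have haρ : a ∈ ρ := hA.1 a ha
  have h1 : ¬ ltIn ρ b a := fun h => hbA (hA.2 a ha b hb h)
  have h2 : a ≠ b := fun h => hbA (h ▸ ha)
  have h3 : ρ.idxOf a ≠ ρ.idxOf b := fun h => h2 ((List.idxOf_inj haρ).1 h)
  unfold ltIn at *; omega

lemma same_sep {ρ : List ℕ} {A B : Set ℕ} (hA : IsIdeal ρ A) (hB : IsIdeal ρ B) :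
    Separated A B := by
  rw [Separated, Set.disjoint_left]
  intro x hx1 hx2
  obtain ⟨a, ha, -, -, -, -⟩ := hx1
  obtain ⟨b, hb, -, -, -, -⟩ := hx2
  have h1 : ltIn ρ a b := ideal_lt hA ha.1 (hB.1 b hb.1) hb.2
  have h2 : ltIn ρ b a := ideal_lt hB hb.1 (hA.1 a ha.1) ha.2
  exact ltIn_asymm h1 h2

lemma cross_sep {n : ℕ} {σ τ ρ₁ ρ₂ : List ℕ}
    (hσ : σ ∈ LinWords n) (hτ : τ ∈ LinWords n)
    (h1 : ρ₁ ∈ ({σ, τ} : Set (List ℕ))) (h2 : ρ₂ ∈ ({σ, τ} : Set (List ℕ)))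
    (hpp : IsPeakPit n {σ, τ}) {A B : Set ℕ}
    (hA : IsIdeal ρ₁ A) (hB : IsIdeal ρ₂ B) : Separated A B := by
  have hρ₁ : ρ₁ ∈ LinWords n := by rcases h1 with h | h <;> simp_all
  have hρ₂ : ρ₂ ∈ LinWords n := by rcases h2 with h | h <;> simp_all
  by_contra hsep
  rw [Separated, Set.not_disjoint_iff] at hsep
  obtain ⟨x, hx1, hx2⟩ := hsep
  obtain ⟨a1, ha1, a2, ha2, hle1, hle2⟩ := hx1
  obtain ⟨b1, hb1, b2, hb2, hle3, hle4⟩ := hx2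
  -- memberships and bounds
  have hmemA : ∀ y ∈ A, y ∈ ρ₁ ∧ y ∈ ρ₂ ∧ 1 ≤ y ∧ y ≤ n := by
    intro y hy
    have h := (lin_mem_iff hρ₁).1 (hA.1 y hy)
    exact ⟨hA.1 y hy, (lin_mem_iff hρ₂).2 h, h.1, h.2⟩
  have hmemB : ∀ y ∈ B, y ∈ ρ₁ ∧ y ∈ ρ₂ ∧ 1 ≤ y ∧ y ≤ n := by
    intro y hy
    have h := (lin_mem_iff hρ₂).1 (hB.1 y hy)
    exact ⟨(lin_mem_iff hρ₁).2 h, hB.1 y hy, h.1, h.2⟩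
  -- order facts
  have hAB : ∀ a ∈ A, ∀ b ∈ B \ A, ltIn ρ₁ a b := fun a ha b hb =>
    ideal_lt hA ha (hmemB b hb.1).1 hb.2
  have hBA : ∀ b ∈ B, ∀ a ∈ A \ B, ltIn ρ₂ b a := fun b hb a ha =>
    ideal_lt hB hb (hmemA a ha.1).2.1 ha.2
  have hne1 : a1 ≠ b2 := fun h => hb2.2 (h ▸ ha1.1)
  have hne2 : b1 ≠ a2 := fun h => ha2.2 (h ▸ hb1.1)
  have hlt1 : a1 < b2 := lt_of_le_of_ne (le_trans hle1 hle4) hne1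
  have hlt2 : b1 < a2 := lt_of_le_of_ne (le_trans hle3 hle2) hne2
  rcases lt_trichotomy a1 b1 with hc | hc | hc
  · -- triple a1 < b1 < a2
    rcases hpp a1 b1 a2 (hmemA a1 ha1.1).2.2.1 hc hlt2 (hmemA a2 ha2.1).2.2.2 with hp | hp
    · exact hp ρ₂ h2 ⟨hBA b1 hb1.1 a1 ha1, hBA b1 hb1.1 a2 ha2⟩
    · exact hp ρ₁ h1 ⟨hAB a1 ha1.1 b1 hb1, hAB a2 ha2.1 b1 hb1⟩
  · exact ha1.2 (hc ▸ hb1.1)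
  · -- triple b1 < a1 < b2
    rcases hpp b1 a1 b2 (hmemB b1 hb1.1).2.2.1 hc hlt1 (hmemB b2 hb2.1).2.2.2 with hp | hp
    · exact hp ρ₁ h1 ⟨hAB a1 ha1.1 b1 hb1, hAB a1 ha1.1 b2 hb2⟩
    · exact hp ρ₂ h2 ⟨hBA b1 hb1.1 a1 ha1, hBA b2 hb2.1 a1 ha1⟩

/-- for `σ, τ ∈ L([n])`, the system `Id(σ) ∪ Id(τ)` is separated iff
for each triple `i<j<k` the restrictions of `σ` and `τ` simultaneously satisfy the
peak condition or simultaneously satisfy the pit condition. -/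
theorem statement_9 (n : ℕ) (σ τ : List ℕ) (hσ : σ ∈ LinWords n) (hτ : τ ∈ LinWords n) :
    SepSystem (IdSet σ ∪ IdSet τ) ↔ IsPeakPit n {σ, τ} := by
  constructor
  · intro hsep i j k hi hij hjk hk
    by_contra hcon
    push_neg at hcon
    obtain ⟨hnp, hnq⟩ := hcon
    rw [PeakCond] at hnp
    rw [PitCond] at hnq
    push_neg at hnp hnq
    obtain ⟨ρ, hρD, hρ1, hρ2⟩ := hnp
    obtain ⟨ρ', hρ'D, hρ'1, hρ'2⟩ := hnq
    have hρL : ρ ∈ LinWords n := by rcases hρD with h | h <;> simp_all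
    have hρ'L : ρ' ∈ LinWords n := by rcases hρ'D with h | h <;> simp_all
    set A : Set ℕ := {x | x ∈ ρ ∧ ¬ ltIn ρ j x} with hAdef
    set B : Set ℕ := {x | x ∈ ρ' ∧ ltIn ρ' x j} with hBdef
    have hA : IsIdeal ρ A := by
      constructor
      · intro x hx; exact hx.1
      · intro x hx y hy hyx
        exact ⟨hy, fun h => hx.2 (ltIn_trans h hyx)⟩
    have hB : IsIdeal ρ' B := by
      constructor
      · intro x hx; exact hx.1
      · intro x hx y hy hyx
        exact ⟨hy, ltIn_trans hyx hx.2⟩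
    have hAmem : A ∈ IdSet σ ∪ IdSet τ := by
      rcases hρD with h | h
      · exact Or.inl (h ▸ hA)
      · exact Or.inr ((Set.mem_singleton_iff.1 h) ▸ hA)
    have hBmem : B ∈ IdSet σ ∪ IdSet τ := by
      rcases hρ'D with h | h
      · exact Or.inl (h ▸ hB)
      · exact Or.inr ((Set.mem_singleton_iff.1 h) ▸ hB)
    have hjρ : j ∈ ρ := (lin_mem_iff hρL).2 ⟨by omega, by omega⟩
    have hiρ' : i ∈ ρ' := (lin_mem_iff hρ'L).2 ⟨by omega, by omega⟩
    have hkρ' : k ∈ ρ' := (lin_mem_iff hρ'L).2 ⟨by omega, by omega⟩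
    have hjA : j ∈ A := ⟨hjρ, ltIn_irrefl ρ j⟩
    have hiA : i ∉ A := fun h => h.2 hρ1
    have hkA : k ∉ A := fun h => h.2 hρ2
    have hjB : j ∉ B := fun h => ltIn_irrefl ρ' j h.2
    have hiB : i ∈ B := ⟨hiρ', hρ'1⟩
    have hkB : k ∈ B := ⟨hkρ', hρ'2⟩
    have hsAB := hsep A hAmem B hBmem
    rw [Separated, Set.disjoint_left] at hsAB
    have hm1 : j ∈ hull (A \ B) := ⟨j, ⟨hjA, hjB⟩, j, ⟨hjA, hjB⟩, le_refl j, le_refl j⟩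
    have hm2 : j ∈ hull (B \ A) := ⟨i, ⟨hiB, hiA⟩, k, ⟨hkB, hkA⟩, le_of_lt hij, le_of_lt hjk⟩
    exact hsAB hm1 hm2
  · intro hpp A hAmem B hBmem
    have hσD : σ ∈ ({σ, τ} : Set (List ℕ)) := Set.mem_insert _ _
    have hτD : τ ∈ ({σ, τ} : Set (List ℕ)) := Set.mem_insert_of_mem _ rfl
    rcases hAmem with hA | hA <;> rcases hBmem with hB | hB
    · exact same_sep hA hB
    · exact cross_sep hσ hτ hσD hτD hpp hA hB
    · exact cross_sep hσ hτ hτD hσD hpp hA hB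
    · exact same_sep hA hB
end

section
/- Let σ, τ ∈ L([n]), and let ρ ∈ L([n]) be a least upper bound and μ ∈ L([n]) a greatest lower bound of {σ, τ} with respect to the weak Bruhat order ≪ (where σ' ≪ τ' means Inv(σ') ⊆ Inv(τ')). Then the following are equivalent: (a) Id(σ) ∪ Id(τ) is separated; (b) Id(σ) ∪ Id(τ) = Id(ρ) ∪ Id(μ); (c) Id(σ) ∪ Id(τ) ⊆ Id(ρ) ∪ Id(μ). -/
namespace St11
open List

variable {n : ℕ} {σ τ ρ μ : List ℕ} {A B : Set ℕ}

lemma mem_linwords (h : σ ∈ LinWords n) {x : ℕ} : x ∈ σ ↔ 1 ≤ x ∧ x ≤ n := by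
  have : σ.Perm (List.range' 1 n) := h
  rw [this.mem_iff, List.mem_range'_1]; omega

lemma nodup_linwords (h : σ ∈ LinWords n) : σ.Nodup := by
  have : σ.Perm (List.range' 1 n) := h
  exact this.nodup_iff.mpr (List.nodup_range' (s := 1) (n := n))

lemma length_linwords (h : σ ∈ LinWords n) : σ.length = n := by
  have : σ.Perm (List.range' 1 n) := h
  rw [this.length_eq, List.length_range']

lemma mem_trans_words (hσ : σ ∈ LinWords n) (hτ : τ ∈ LinWords n) {x : ℕ}
    (hx : x ∈ σ) : x ∈ τ := (mem_linwords hτ).mpr ((mem_linwords hσ).mp hx)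

lemma ltIn_asymm {i j : ℕ} (h : ltIn σ i j) : ¬ ltIn σ j i := by
  unfold ltIn at *; omega

lemma ltIn_irrefl (σ : List ℕ) (i : ℕ) : ¬ ltIn σ i i := by
  unfold ltIn; omega

lemma ltIn_trans {i j k : ℕ} (h : ltIn σ i j) (h' : ltIn σ j k) : ltIn σ i k :=
  Nat.lt_trans h h'

lemma ltIn_total (hσn : σ.Nodup) {i j : ℕ} (hi : i ∈ σ) (hj : j ∈ σ) (hij : i ≠ j) :
    ltIn σ i j ∨ ltIn σ j i := by
  rcases Nat.lt_trichotomy (σ.idxOf i) (σ.idxOf j) with h|h|h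
  · exact Or.inl h
  · exact absurd ((List.idxOf_inj hi).mp h) hij
  · exact Or.inr h

lemma ideal_cross (hσn : σ.Nodup) (hA : A ∈ IdSet σ) {i j : ℕ}
    (hi : i ∈ A) (hj : j ∈ σ) (hj' : j ∉ A) : ltIn σ i j := by
  have hiw : i ∈ σ := hA.1 i hi
  have hne : i ≠ j := fun h => hj' (h ▸ hi)
  rcases ltIn_total hσn hiw hj hne with h|h
  · exact h
  · exact absurd (hA.2 i hi j hj h) hj'

lemma same_word_no_cross (hσn : σ.Nodup) (hA : A ∈ IdSet σ) (hB : B ∈ IdSet σ)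
    {x y : ℕ} (hx : x ∈ A \ B) (hy : y ∈ B \ A) : False := by
  have h1 : ltIn σ x y := ideal_cross hσn hA hx.1 (hB.1 y hy.1) hy.2
  have h2 : ltIn σ y x := ideal_cross hσn hB hy.1 (hA.1 x hx.1) hx.2
  exact ltIn_asymm h1 h2

lemma hull_empty : hull (∅ : Set ℕ) = ∅ := by
  ext x; simp [hull]

lemma separated_symm (h : Separated A B) : Separated B A := h.symm

lemma separated_of_same_word (hσn : σ.Nodup) (hA : A ∈ IdSet σ) (hB : B ∈ IdSet σ) :
    Separated A B := by
  by_cases h : ∃ x, x ∈ A \ B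
  · obtain ⟨x, hx⟩ := h
    have : B \ A = ∅ := by
      ext y; simp only [Set.mem_empty_iff_false, iff_false]
      exact fun hy => same_word_no_cross hσn hA hB hx hy
    rw [Separated, this, hull_empty]
    exact Set.disjoint_empty _
  · have : A \ B = ∅ := by
      ext y; simp only [Set.mem_empty_iff_false, iff_false]
      exact fun hy => h ⟨y, hy⟩
    rw [Separated, this, hull_empty]
    exact Set.empty_disjoint _

lemma sep_no_mix (h : Separated A B) {x y z : ℕ} (hxy : x ≤ y) (hyz : y ≤ z)
    (hx : x ∈ A \ B) (hy : y ∈ B \ A) (hz : z ∈ A \ B) : False := by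
  have h1 : y ∈ hull (A \ B) := ⟨x, hx, z, hz, hxy, hyz⟩
  have h2 : y ∈ hull (B \ A) := ⟨y, hy, y, hy, le_refl y, le_refl y⟩
  exact Set.disjoint_left.mp h h1 h2

lemma sep_no_mix' (h : Separated A B) {x y z : ℕ} (hxy : x ≤ y) (hyz : y ≤ z)
    (hx : x ∈ B \ A) (hy : y ∈ A \ B) (hz : z ∈ B \ A) : False := by
  have h1 : y ∈ hull (B \ A) := ⟨x, hx, z, hz, hxy, hyz⟩
  have h2 : y ∈ hull (A \ B) := ⟨y, hy, y, hy, le_refl y, le_refl y⟩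
  exact Set.disjoint_left.mp h h2 h1

lemma exists_triple_of_not_sep (h : ¬ Separated A B) :
    (∃ x y z : ℕ, x < y ∧ y < z ∧ x ∈ A \ B ∧ y ∈ B \ A ∧ z ∈ A \ B) ∨
    (∃ x y z : ℕ, x < y ∧ y < z ∧ x ∈ B \ A ∧ y ∈ A \ B ∧ z ∈ B \ A) := by
  rw [Separated, Set.not_disjoint_iff] at h
  obtain ⟨u, ⟨a1, ha1, a2, ha2, hu1, hu2⟩, ⟨b1, hb1, b2, hb2, hu3, hu4⟩⟩ := h
  rcases le_total a1 b1 with h5|h5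
  · left
    have hne1 : a1 ≠ b1 := fun h => hb1.2 (h ▸ ha1.1)
    have hne2 : b1 ≠ a2 := fun h => hb1.2 (h ▸ ha2.1)
    exact ⟨a1, b1, a2, lt_of_le_of_ne h5 hne1,
      lt_of_le_of_ne (le_trans hu3 hu2) hne2, ha1, hb1, ha2⟩
  · right
    have hne1 : b1 ≠ a1 := fun h => hb1.2 (h ▸ ha1.1)
    have hne2 : a1 ≠ b2 := fun h => hb2.2 (h ▸ ha1.1)
    exact ⟨b1, a1, b2, lt_of_le_of_ne h5 hne1,
      lt_of_le_of_ne (le_trans hu1 hu4) hne2, hb1, ha1, hb2⟩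

/-! ### Ideals are take-prefixes; cardinality of `IdSet` -/

lemma mem_take_iff_indexOf_lt {l : List ℕ} {x k : ℕ} (hx : x ∈ l) :
    x ∈ l.take k ↔ l.idxOf x < k := by
  constructor
  · intro h
    have h1 : List.idxOf x l = List.idxOf x (l.take k) := by
      conv_lhs => rw [← List.take_append_drop k l]
      exact List.idxOf_append_of_mem h
    rw [h1]
    calc List.idxOf x (l.take k) < (l.take k).length := List.idxOf_lt_length_iff.mpr h
      _ ≤ k := by simp [List.length_take]
  · intro h
    have hm : l.idxOf x < l.length := List.idxOf_lt_length_iff.mpr hx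
    have hlen : l.idxOf x < (l.take k).length := by simp [List.length_take]; omega
    have : (l.take k).get ⟨l.idxOf x, hlen⟩ = x := by
      simp only [List.get_eq_getElem, List.getElem_take]
      exact List.getElem_idxOf hm
    exact this ▸ List.get_mem (l.take k) ⟨l.idxOf x, hlen⟩

lemma take_mem_IdSet (hσn : σ.Nodup) (k : ℕ) : {x | x ∈ σ.take k} ∈ IdSet σ := by
  refine ⟨fun x hx => List.mem_of_mem_take hx, fun x hx y hy hlt => ?_⟩
  have hxσ : x ∈ σ := List.mem_of_mem_take hx
  rw [Set.mem_setOf_eq, mem_take_iff_indexOf_lt hxσ] at hx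
  rw [Set.mem_setOf_eq, mem_take_iff_indexOf_lt hy]
  exact Nat.lt_trans hlt hx

lemma ideal_closed_le (hσn : σ.Nodup) (hA : A ∈ IdSet σ) {x y : ℕ}
    (hx : x ∈ A) (hy : y ∈ σ) (h : σ.idxOf y ≤ σ.idxOf x) : y ∈ A := by
  rcases Nat.lt_or_ge (σ.idxOf y) (σ.idxOf x) with h'|h'
  · exact hA.2 x hx y hy h'
  · have : σ.idxOf y = σ.idxOf x := le_antisymm h h'
    have := (List.idxOf_inj hy).mp this
    exact this ▸ hx

lemma ideal_eq_take (hσn : σ.Nodup) (hA : A ∈ IdSet σ) :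
    ∃ k ≤ σ.length, A = {x | x ∈ σ.take k} := by
  classical
  set S : Finset ℕ := σ.toFinset.filter (fun x => x ∈ A) with hS
  set k : ℕ := S.sup (fun x => σ.idxOf x + 1) with hk
  have hkle : k ≤ σ.length := by
    apply Finset.sup_le
    intro b hb
    have : b ∈ σ := by
      rw [hS, Finset.mem_filter, List.mem_toFinset] at hb; exact hb.1
    have := List.idxOf_lt_length_iff.mpr this
    omega
  refine ⟨k, hkle, ?_⟩
  ext x
  simp only [Set.mem_setOf_eq]
  constructor
  · intro hx
    have hxσ : x ∈ σ := hA.1 x hx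
    rw [mem_take_iff_indexOf_lt hxσ]
    have hxS : x ∈ S := by
      rw [hS, Finset.mem_filter, List.mem_toFinset]; exact ⟨hxσ, hx⟩
    have h2 : σ.idxOf x + 1 ≤ k := Finset.le_sup (f := fun x => σ.idxOf x + 1) hxS
    omega
  · intro hx
    have hxσ : x ∈ σ := List.mem_of_mem_take hx
    rw [mem_take_iff_indexOf_lt hxσ, hk, Finset.lt_sup_iff] at hx
    obtain ⟨b, hb, hlt⟩ := hx
    rw [hS, Finset.mem_filter, List.mem_toFinset] at hb
    exact ideal_closed_le hσn hA hb.2 hxσ (by omega)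

lemma idset_eq_image (hσn : σ.Nodup) :
    IdSet σ = (fun k => {x | x ∈ σ.take k}) '' (Set.Iic σ.length) := by
  ext A
  constructor
  · intro hA
    obtain ⟨k, hk, hAk⟩ := ideal_eq_take hσn hA
    exact ⟨k, hk, hAk.symm⟩
  · rintro ⟨k, hk, rfl⟩
    exact take_mem_IdSet hσn k

lemma idset_finite (hσn : σ.Nodup) : (IdSet σ).Finite := by
  rw [idset_eq_image hσn]
  exact (Set.finite_Iic _).image _

lemma ncard_take_set (hσn : σ.Nodup) {k : ℕ} (hk : k ≤ σ.length) :
    ({x | x ∈ σ.take k} : Set ℕ).ncard = k := by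
  classical
  have h1 : ({x | x ∈ σ.take k} : Set ℕ) = ↑(σ.take k).toFinset := by
    ext x; simp
  rw [h1, Set.ncard_coe_finset,
    List.toFinset_card_of_nodup (((σ.take_sublist k)).nodup hσn)]
  simp [List.length_take]; omega

lemma ncard_idset (hσ : σ ∈ LinWords n) : (IdSet σ).ncard = n + 1 := by
  have hσn := nodup_linwords hσ
  rw [idset_eq_image hσn]
  have hinj : Set.InjOn (fun k => {x | x ∈ σ.take k}) (Set.Iic σ.length) := by
    intro a ha b hb hab
    have h := congrArg Set.ncard hab
    simp only at h
    rwa [ncard_take_set hσn ha, ncard_take_set hσn hb] at h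
  rw [Set.ncard_image_of_injOn hinj, ← Finset.coe_Iic, Set.ncard_coe_finset,
    Nat.card_Iic, length_linwords hσ]

/-! ### Block words -/

def ascW (n : ℕ) (S : Finset ℕ) : List ℕ :=
  S.sort (· ≤ ·) ++ ((Finset.Icc 1 n) \ S).sort (· ≤ ·)

def descW (n : ℕ) (S : Finset ℕ) : List ℕ :=
  (S.sort (· ≤ ·)).reverse ++ (((Finset.Icc 1 n) \ S).sort (· ≤ ·)).reverse

lemma mem_ascW {S : Finset ℕ} (hS : S ⊆ Finset.Icc 1 n) {x : ℕ} :
    x ∈ ascW n S ↔ x ∈ Finset.Icc 1 n := by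
  simp only [ascW, List.mem_append, Finset.mem_sort, Finset.mem_sdiff]
  constructor
  · rintro (h | ⟨h, _⟩)
    · exact hS h
    · exact h
  · intro h
    by_cases h' : x ∈ S
    · exact Or.inl h'
    · exact Or.inr ⟨h, h'⟩

lemma mem_descW {S : Finset ℕ} (hS : S ⊆ Finset.Icc 1 n) {x : ℕ} :
    x ∈ descW n S ↔ x ∈ Finset.Icc 1 n := by
  simp only [descW, List.mem_append, List.mem_reverse, Finset.mem_sort, Finset.mem_sdiff]
  constructor
  · rintro (h | ⟨h, _⟩)
    · exact hS h
    · exact h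
  · intro h
    by_cases h' : x ∈ S
    · exact Or.inl h'
    · exact Or.inr ⟨h, h'⟩

lemma ascW_linwords {S : Finset ℕ} (hS : S ⊆ Finset.Icc 1 n) : ascW n S ∈ LinWords n := by
  show (ascW n S).Perm (List.range' 1 n)
  rw [List.perm_ext_iff_of_nodup ?_ (List.nodup_range' (s := 1) (n := n))]
  · intro x
    rw [mem_ascW hS, List.mem_range'_1, Finset.mem_Icc]
    omega
  · rw [ascW, List.nodup_append]
    refine ⟨Finset.sort_nodup _ _, Finset.sort_nodup _ _, ?_⟩
    intro x hx y hx' hxy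
    subst hxy
    rw [Finset.mem_sort] at hx hx'
    exact (Finset.mem_sdiff.mp hx').2 hx

lemma descW_linwords {S : Finset ℕ} (hS : S ⊆ Finset.Icc 1 n) : descW n S ∈ LinWords n := by
  show (descW n S).Perm (List.range' 1 n)
  rw [List.perm_ext_iff_of_nodup ?_ (List.nodup_range' (s := 1) (n := n))]
  · intro x
    rw [mem_descW hS, List.mem_range'_1, Finset.mem_Icc]
    omega
  · rw [descW, List.nodup_append]
    refine ⟨(List.nodup_reverse).mpr (Finset.sort_nodup _ _),
      (List.nodup_reverse).mpr (Finset.sort_nodup _ _), ?_⟩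
    intro x hx y hx' hxy
    subst hxy
    rw [List.mem_reverse, Finset.mem_sort] at hx hx'
    exact (Finset.mem_sdiff.mp hx').2 hx

lemma indexOf_lt_of_pairwise {r : ℕ → ℕ → Prop} {l : List ℕ} (hl : l.Pairwise r) {i j : ℕ}
    (hi : i ∈ l) (hj : j ∈ l) (hij : List.idxOf i l < List.idxOf j l) : r i j := by
  have h1 := List.idxOf_lt_length_iff.mpr hi
  have h2 := List.idxOf_lt_length_iff.mpr hj
  have := List.pairwise_iff_get.mp hl ⟨_, h1⟩ ⟨_, h2⟩ hij
  rwa [List.idxOf_get h1, List.idxOf_get h2] at this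

lemma sorted_lt_indexOf_iff {l : List ℕ} (hl : l.Pairwise (· < ·)) {i j : ℕ}
    (hi : i ∈ l) (hj : j ∈ l) : List.idxOf i l < List.idxOf j l ↔ i < j := by
  constructor
  · exact indexOf_lt_of_pairwise hl hi hj
  · intro h
    rcases Nat.lt_trichotomy (List.idxOf i l) (List.idxOf j l) with h'|h'|h'
    · exact h'
    · exact absurd ((List.idxOf_inj hi).mp h') (Nat.ne_of_lt h)
    · exact absurd (indexOf_lt_of_pairwise hl hj hi h') (by omega)

lemma sorted_gt_indexOf_iff {l : List ℕ} (hl : l.Pairwise (· > ·)) {i j : ℕ}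
    (hi : i ∈ l) (hj : j ∈ l) : List.idxOf i l < List.idxOf j l ↔ j < i := by
  constructor
  · exact indexOf_lt_of_pairwise hl hi hj
  · intro h
    rcases Nat.lt_trichotomy (List.idxOf i l) (List.idxOf j l) with h'|h'|h'
    · exact h'
    · exact absurd ((List.idxOf_inj hi).mp h').symm (Nat.ne_of_lt h)
    · exact absurd (indexOf_lt_of_pairwise hl hj hi h') (by omega)

lemma ltIn_two_block {l₁ l₂ : List ℕ} {i j : ℕ} (hi : i ∈ l₁) (hj : j ∈ l₂) (hj' : j ∉ l₁) :
    ltIn (l₁ ++ l₂) i j := by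
  unfold ltIn
  rw [List.idxOf_append_of_mem hi, List.idxOf_append_of_notMem hj']
  calc List.idxOf i l₁ < l₁.length := List.idxOf_lt_length_iff.mpr hi
    _ ≤ l₁.length + List.idxOf j l₂ := Nat.le_add_right _ _

lemma ltIn_within_left {l₁ l₂ : List ℕ} {i j : ℕ} (hi : i ∈ l₁) (hj : j ∈ l₁) :
    ltIn (l₁ ++ l₂) i j ↔ List.idxOf i l₁ < List.idxOf j l₁ := by
  unfold ltIn
  rw [List.idxOf_append_of_mem hi, List.idxOf_append_of_mem hj]

lemma ltIn_within_right {l₁ l₂ : List ℕ} {i j : ℕ} (hi : i ∉ l₁) (hj : j ∉ l₁) :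
    ltIn (l₁ ++ l₂) i j ↔ List.idxOf i l₂ < List.idxOf j l₂ := by
  unfold ltIn
  rw [List.idxOf_append_of_notMem hi, List.idxOf_append_of_notMem hj]
  omega

lemma ltIn_ascW {S : Finset ℕ} (hS : S ⊆ Finset.Icc 1 n) {i j : ℕ}
    (hi : i ∈ Finset.Icc 1 n) (hj : j ∈ Finset.Icc 1 n) :
    ltIn (ascW n S) i j ↔ ((i ∈ S ∧ j ∉ S) ∨ ((i ∈ S ↔ j ∈ S) ∧ i < j)) := by
  have hsort : (S.sort (· ≤ ·)).Pairwise (· < ·) := (Finset.sortedLT_sort S).pairwise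
  have hsort' : (((Finset.Icc 1 n) \ S).sort (· ≤ ·)).Pairwise (· < ·) :=
    (Finset.sortedLT_sort _).pairwise
  by_cases hiS : i ∈ S <;> by_cases hjS : j ∈ S
  · rw [ascW, ltIn_within_left ((Finset.mem_sort _).mpr hiS) ((Finset.mem_sort _).mpr hjS),
      sorted_lt_indexOf_iff hsort ((Finset.mem_sort _).mpr hiS) ((Finset.mem_sort _).mpr hjS)]
    simp [hiS, hjS]
  · have h1 : ltIn (ascW n S) i j :=
      ltIn_two_block ((Finset.mem_sort _).mpr hiS)
        ((Finset.mem_sort _).mpr (Finset.mem_sdiff.mpr ⟨hj, hjS⟩))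
        (fun h => hjS ((Finset.mem_sort _).mp h))
    simp [h1, hiS, hjS]
  · have h1 : ltIn (ascW n S) j i :=
      ltIn_two_block ((Finset.mem_sort _).mpr hjS)
        ((Finset.mem_sort _).mpr (Finset.mem_sdiff.mpr ⟨hi, hiS⟩))
        (fun h => hiS ((Finset.mem_sort _).mp h))
    simp [ltIn_asymm h1, hiS, hjS]
  · have hil : i ∉ S.sort (· ≤ ·) := fun h => hiS ((Finset.mem_sort _).mp h)
    have hjl : j ∉ S.sort (· ≤ ·) := fun h => hjS ((Finset.mem_sort _).mp h)
    rw [ascW, ltIn_within_right hil hjl,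
      sorted_lt_indexOf_iff hsort' ((Finset.mem_sort _).mpr (Finset.mem_sdiff.mpr ⟨hi, hiS⟩))
        ((Finset.mem_sort _).mpr (Finset.mem_sdiff.mpr ⟨hj, hjS⟩))]
    simp [hiS, hjS]

lemma ltIn_descW {S : Finset ℕ} (hS : S ⊆ Finset.Icc 1 n) {i j : ℕ}
    (hi : i ∈ Finset.Icc 1 n) (hj : j ∈ Finset.Icc 1 n) :
    ltIn (descW n S) i j ↔ ((i ∈ S ∧ j ∉ S) ∨ ((i ∈ S ↔ j ∈ S) ∧ j < i)) := by
  have hsort : ((S.sort (· ≤ ·)).reverse).Pairwise (· > ·) :=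
    List.pairwise_reverse.mpr ((Finset.sortedLT_sort S).pairwise)
  have hsort' : ((((Finset.Icc 1 n) \ S).sort (· ≤ ·)).reverse).Pairwise (· > ·) :=
    List.pairwise_reverse.mpr ((Finset.sortedLT_sort _).pairwise)
  have memrev : ∀ (T : Finset ℕ) (x : ℕ), x ∈ (T.sort (· ≤ ·)).reverse ↔ x ∈ T := by
    intro T x; rw [List.mem_reverse, Finset.mem_sort]
  by_cases hiS : i ∈ S <;> by_cases hjS : j ∈ S
  · rw [descW, ltIn_within_left ((memrev _ _).mpr hiS) ((memrev _ _).mpr hjS),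
      sorted_gt_indexOf_iff hsort ((memrev _ _).mpr hiS) ((memrev _ _).mpr hjS)]
    simp [hiS, hjS]
  · have h1 : ltIn (descW n S) i j :=
      ltIn_two_block ((memrev _ _).mpr hiS)
        ((memrev _ _).mpr (Finset.mem_sdiff.mpr ⟨hj, hjS⟩))
        (fun h => hjS ((memrev _ _).mp h))
    simp [h1, hiS, hjS]
  · have h1 : ltIn (descW n S) j i :=
      ltIn_two_block ((memrev _ _).mpr hjS)
        ((memrev _ _).mpr (Finset.mem_sdiff.mpr ⟨hi, hiS⟩))
        (fun h => hiS ((memrev _ _).mp h))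
    simp [ltIn_asymm h1, hiS, hjS]
  · have hil : i ∉ (S.sort (· ≤ ·)).reverse := fun h => hiS ((memrev _ _).mp h)
    have hjl : j ∉ (S.sort (· ≤ ·)).reverse := fun h => hjS ((memrev _ _).mp h)
    rw [descW, ltIn_within_right hil hjl,
      sorted_gt_indexOf_iff hsort' ((memrev _ _).mpr (Finset.mem_sdiff.mpr ⟨hi, hiS⟩))
        ((memrev _ _).mpr (Finset.mem_sdiff.mpr ⟨hj, hjS⟩))]
    simp [hiS, hjS]

lemma invpairs_ascW {S : Finset ℕ} (hS : S ⊆ Finset.Icc 1 n) {p : ℕ × ℕ} :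
    p ∈ InvPairs (ascW n S) ↔
      p.1 ∈ Finset.Icc 1 n ∧ p.2 ∈ Finset.Icc 1 n ∧ p.1 < p.2 ∧ p.2 ∈ S ∧ p.1 ∉ S := by
  constructor
  · rintro ⟨h1, h2, h3, h4⟩
    rw [mem_ascW hS] at h1 h2
    rw [ltIn_ascW hS h2 h1] at h4
    refine ⟨h1, h2, h3, ?_⟩
    rcases h4 with ⟨h5, h6⟩ | ⟨_, h5⟩
    · exact ⟨h5, h6⟩
    · omega
  · rintro ⟨h1, h2, h3, h4, h5⟩
    exact ⟨(mem_ascW hS).mpr h1, (mem_ascW hS).mpr h2, h3,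
      (ltIn_ascW hS h2 h1).mpr (Or.inl ⟨h4, h5⟩)⟩

lemma invpairs_descW {S : Finset ℕ} (hS : S ⊆ Finset.Icc 1 n) {p : ℕ × ℕ} :
    p ∈ InvPairs (descW n S) ↔
      p.1 ∈ Finset.Icc 1 n ∧ p.2 ∈ Finset.Icc 1 n ∧ p.1 < p.2 ∧ ¬(p.1 ∈ S ∧ p.2 ∉ S) := by
  constructor
  · rintro ⟨h1, h2, h3, h4⟩
    rw [mem_descW hS] at h1 h2
    rw [ltIn_descW hS h2 h1] at h4
    refine ⟨h1, h2, h3, ?_⟩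
    rintro ⟨h5, h6⟩
    rcases h4 with ⟨h7, h8⟩ | ⟨h7, h8⟩
    · exact h6 h7
    · exact h6 (h7.mpr h5)
  · rintro ⟨h1, h2, h3, h4⟩
    refine ⟨(mem_descW hS).mpr h1, (mem_descW hS).mpr h2, h3, ?_⟩
    rw [ltIn_descW hS h2 h1]
    by_cases h5 : p.2 ∈ S <;> by_cases h6 : p.1 ∈ S
    · exact Or.inr ⟨by tauto, h3⟩
    · exact Or.inl ⟨h5, h6⟩
    · exact absurd ⟨h6, h5⟩ h4
    · exact Or.inr ⟨by tauto, h3⟩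

lemma mem_word_iff_Icc (hσ : σ ∈ LinWords n) {x : ℕ} : x ∈ σ ↔ x ∈ Finset.Icc 1 n := by
  rw [mem_linwords hσ, Finset.mem_Icc]

/-- If `A` is an ideal of `σ` and all its "positive crossing pairs" are inverted in `τ`
as well, then `A` is an ideal of the greatest lower bound `μ`. -/
lemma mem_IdSet_mu (hσ : σ ∈ LinWords n) (hτ : τ ∈ LinWords n) (hμ : μ ∈ LinWords n)
    (hμσ : InvPairs μ ⊆ InvPairs σ)
    (hglb : ∀ χ ∈ LinWords n, InvPairs χ ⊆ InvPairs σ → InvPairs χ ⊆ InvPairs τ →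
      InvPairs χ ⊆ InvPairs μ)
    (hA : A ∈ IdSet σ)
    (hP : ∀ i j : ℕ, i < j → i ∈ σ → j ∈ σ → j ∈ A → i ∉ A → ltIn τ j i) :
    A ∈ IdSet μ := by
  classical
  have hσn := nodup_linwords hσ
  set S : Finset ℕ := (Finset.Icc 1 n).filter (fun x => x ∈ A) with hSdef
  have hS : S ⊆ Finset.Icc 1 n := Finset.filter_subset _ _
  have memS : ∀ x : ℕ, x ∈ S ↔ (x ∈ Finset.Icc 1 n ∧ x ∈ A) := fun x => Finset.mem_filter
  have memA : ∀ x : ℕ, x ∈ A → x ∈ S := fun x hx =>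
    (memS x).mpr ⟨(mem_word_iff_Icc hσ).mp (hA.1 x hx), hx⟩
  -- the ascending block word has inversion set exactly P(A)
  have hsub1 : InvPairs (ascW n S) ⊆ InvPairs σ := by
    rintro ⟨p1, p2⟩ hp
    rw [invpairs_ascW hS] at hp
    obtain ⟨h1, h2, h3, h4, h5⟩ := hp
    have h1' : p1 ∈ σ := (mem_word_iff_Icc hσ).mpr h1
    have h2A : p2 ∈ A := ((memS p2).mp h4).2
    have h1A : p1 ∉ A := fun h => h5 (memA _ h)
    exact ⟨h1', (mem_word_iff_Icc hσ).mpr h2, h3, ideal_cross hσn hA h2A h1' h1A⟩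
  have hsub2 : InvPairs (ascW n S) ⊆ InvPairs τ := by
    rintro ⟨p1, p2⟩ hp
    rw [invpairs_ascW hS] at hp
    obtain ⟨h1, h2, h3, h4, h5⟩ := hp
    have h1' : p1 ∈ σ := (mem_word_iff_Icc hσ).mpr h1
    have h2' : p2 ∈ σ := (mem_word_iff_Icc hσ).mpr h2
    have h2A : p2 ∈ A := ((memS p2).mp h4).2
    have h1A : p1 ∉ A := fun h => h5 (memA _ h)
    exact ⟨mem_trans_words hσ hτ h1', mem_trans_words hσ hτ h2', h3, hP p1 p2 h3 h1' h2' h2A h1A⟩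
  have hsubμ : InvPairs (ascW n S) ⊆ InvPairs μ :=
    hglb _ (ascW_linwords hS) hsub1 hsub2
  refine ⟨fun x hx => mem_trans_words hσ hμ (hA.1 x hx), ?_⟩
  intro x hx y hy hlt
  by_contra hyA
  have hxμ : x ∈ μ := mem_trans_words hσ hμ (hA.1 x hx)
  have hyσ : y ∈ σ := mem_trans_words hμ hσ hy
  rcases Nat.lt_trichotomy y x with h|h|h
  · -- (y,x) ∈ P(A) = InvPairs (ascW n S) ⊆ InvPairs μ, giving ltIn μ x y; contradiction
    have : (y, x) ∈ InvPairs μ := by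
      apply hsubμ
      rw [invpairs_ascW hS]
      exact ⟨(mem_word_iff_Icc hσ).mp hyσ, (mem_word_iff_Icc hμ).mp hxμ, h,
        memA x hx, fun hc => hyA (((memS y).mp hc).2)⟩
    exact ltIn_asymm this.2.2.2 hlt
  · exact hyA (h ▸ hx)
  · -- x < y : (x,y) ∈ InvPairs μ ⊆ InvPairs σ, contradicting the ideal property of A in σ
    have hmem : (x, y) ∈ InvPairs μ := ⟨hxμ, hy, h, hlt⟩
    have h1 : ltIn σ y x := (hμσ hmem).2.2.2
    have h2 : ltIn σ x y := ideal_cross hσn hA hx hyσ hyA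
    exact ltIn_asymm h2 h1

/-- If `A` is an ideal of `σ` and none of its "negative crossing pairs" is inverted
in `τ`, then `A` is an ideal of the least upper bound `ρ`. -/
lemma mem_IdSet_rho (hσ : σ ∈ LinWords n) (hτ : τ ∈ LinWords n) (hρ : ρ ∈ LinWords n)
    (hσρ : InvPairs σ ⊆ InvPairs ρ)
    (hlub : ∀ χ ∈ LinWords n, InvPairs σ ⊆ InvPairs χ → InvPairs τ ⊆ InvPairs χ →
      InvPairs ρ ⊆ InvPairs χ)
    (hA : A ∈ IdSet σ)
    (hN : ∀ i j : ℕ, i < j → i ∈ σ → j ∈ σ → i ∈ A → j ∉ A → ¬ ltIn τ j i) :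
    A ∈ IdSet ρ := by
  classical
  have hσn := nodup_linwords hσ
  set S : Finset ℕ := (Finset.Icc 1 n).filter (fun x => x ∈ A) with hSdef
  have hS : S ⊆ Finset.Icc 1 n := Finset.filter_subset _ _
  have memS : ∀ x : ℕ, x ∈ S ↔ (x ∈ Finset.Icc 1 n ∧ x ∈ A) := fun x => Finset.mem_filter
  have memA : ∀ x : ℕ, x ∈ A → x ∈ S := fun x hx =>
    (memS x).mpr ⟨(mem_word_iff_Icc hσ).mp (hA.1 x hx), hx⟩
  have hsub1 : InvPairs σ ⊆ InvPairs (descW n S) := by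
    rintro ⟨p1, p2⟩ hp
    obtain ⟨h1, h2, h3, h4⟩ := hp
    rw [invpairs_descW hS]
    refine ⟨(mem_word_iff_Icc hσ).mp h1, (mem_word_iff_Icc hσ).mp h2, h3, ?_⟩
    rintro ⟨h5, h6⟩
    have h5A : p1 ∈ A := ((memS p1).mp h5).2
    have h6A : p2 ∉ A := fun h => h6 (memA _ h)
    exact ltIn_asymm (ideal_cross hσn hA h5A h2 h6A) h4
  have hsub2 : InvPairs τ ⊆ InvPairs (descW n S) := by
    rintro ⟨p1, p2⟩ hp
    obtain ⟨h1, h2, h3, h4⟩ := hp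
    have h1' : p1 ∈ σ := mem_trans_words hτ hσ h1
    have h2' : p2 ∈ σ := mem_trans_words hτ hσ h2
    rw [invpairs_descW hS]
    refine ⟨(mem_word_iff_Icc hσ).mp h1', (mem_word_iff_Icc hσ).mp h2', h3, ?_⟩
    rintro ⟨h5, h6⟩
    have h5A : p1 ∈ A := ((memS p1).mp h5).2
    have h6A : p2 ∉ A := fun h => h6 (memA _ h)
    exact hN p1 p2 h3 h1' h2' h5A h6A h4
  have hsubρ : InvPairs ρ ⊆ InvPairs (descW n S) :=
    hlub _ (descW_linwords hS) hsub1 hsub2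
  refine ⟨fun x hx => mem_trans_words hσ hρ (hA.1 x hx), ?_⟩
  intro x hx y hy hlt
  by_contra hyA
  have hxρ : x ∈ ρ := mem_trans_words hσ hρ (hA.1 x hx)
  have hyσ : y ∈ σ := mem_trans_words hρ hσ hy
  rcases Nat.lt_trichotomy y x with h|h|h
  · -- (y,x) ∈ P(A) ⊆ InvPairs σ ⊆ InvPairs ρ gives ltIn ρ x y contradicting hlt
    have hmem : (y, x) ∈ InvPairs σ :=
      ⟨hyσ, hA.1 x hx, h, ideal_cross hσn hA hx hyσ hyA⟩
    exact ltIn_asymm (hσρ hmem).2.2.2 hlt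
  · exact hyA (h ▸ hx)
  · -- x < y : (x,y) ∈ InvPairs ρ ⊆ InvPairs (descW n S), but (x,y) ∈ N(A): contradiction
    have hmem : (x, y) ∈ InvPairs ρ := ⟨hxρ, hy, h, hlt⟩
    have := hsubρ hmem
    rw [invpairs_descW hS] at this
    exact this.2.2.2 ⟨memA x hx, fun hc => hyA (((memS y).mp hc).2)⟩

lemma Ble_mem_IdSet (τ : List ℕ) (x : ℕ) :
    {y | y ∈ τ ∧ (ltIn τ y x ∨ y = x)} ∈ IdSet τ := by
  refine ⟨fun y hy => hy.1, fun u hu v hv hlt => ⟨hv, ?_⟩⟩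
  rcases hu.2 with h|h
  · exact Or.inl (ltIn_trans hlt h)
  · exact Or.inl (h ▸ hlt)

lemma Blt_mem_IdSet (τ : List ℕ) (x : ℕ) :
    {y | y ∈ τ ∧ ltIn τ y x} ∈ IdSet τ :=
  ⟨fun y hy => hy.1, fun u hu v hv hlt => ⟨hv, ltIn_trans hlt hu.2⟩⟩

/-- The key dichotomy: if an ideal `A` of `σ` is separated from every ideal of `τ`,
then either no negative crossing pair of `A` is `τ`-inverted, or every positive
crossing pair of `A` is `τ`-inverted. -/
lemma dichotomy (hσ : σ ∈ LinWords n) (hτ : τ ∈ LinWords n)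
    (hA : A ∈ IdSet σ)
    (hsep : ∀ B ∈ IdSet τ, Separated A B) :
    (∀ i j : ℕ, i < j → i ∈ σ → j ∈ σ → i ∈ A → j ∉ A → ¬ ltIn τ j i) ∨
    (∀ i j : ℕ, i < j → i ∈ σ → j ∈ σ → j ∈ A → i ∉ A → ltIn τ j i) := by
  have hτn := nodup_linwords hτ
  by_contra hcon
  push_neg at hcon
  obtain ⟨h1, h2⟩ := hcon
  obtain ⟨a, b, hab, haσ, hbσ, haA, hbA, hba⟩ := h1
  obtain ⟨c, d, hcd, hcσ, hdσ, hdA, hcA, hnd⟩ := h2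
  have haτ : a ∈ τ := mem_trans_words hσ hτ haσ
  have hbτ : b ∈ τ := mem_trans_words hσ hτ hbσ
  have hcτ : c ∈ τ := mem_trans_words hσ hτ hcσ
  have hdτ : d ∈ τ := mem_trans_words hσ hτ hdσ
  have hcd' : ltIn τ c d := by
    rcases ltIn_total hτn hcτ hdτ (fun h => hcA (h ▸ hdA)) with h|h
    · exact h
    · exact absurd h hnd
  by_cases hdb : ltIn τ d b
  · -- c <τ d <τ b <τ a
    by_cases hca : c < a
    · -- use B = Ble b with triple c < a < b
      have haB : a ∉ {y | y ∈ τ ∧ (ltIn τ y b ∨ y = b)} := fun h =>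
        h.2.elim (fun h' => ltIn_asymm hba h') (fun h' => hbA (h' ▸ haA))
      exact sep_no_mix' (hsep _ (Ble_mem_IdSet τ b)) (le_of_lt hca) (le_of_lt hab)
        ⟨⟨hcτ, Or.inl (ltIn_trans hcd' hdb)⟩, hcA⟩ ⟨haA, haB⟩ ⟨⟨hbτ, Or.inr rfl⟩, hbA⟩
    · -- a < c; use B = Blt d with triple a < c < d
      have hac : a < c := lt_of_le_of_ne (not_lt.mp hca) (fun h => hcA (h ▸ haA))
      have hda : ltIn τ d a := ltIn_trans hdb hba
      have haB : a ∉ {y | y ∈ τ ∧ ltIn τ y d} := fun h => ltIn_asymm hda h.2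
      have hdB : d ∉ {y | y ∈ τ ∧ ltIn τ y d} := fun h => ltIn_irrefl τ d h.2
      exact sep_no_mix (hsep _ (Blt_mem_IdSet τ d)) (le_of_lt hac) (le_of_lt hcd)
        ⟨haA, haB⟩ ⟨⟨hcτ, hcd'⟩, hcA⟩ ⟨hdA, hdB⟩
  · have hdB : d ∉ {y | y ∈ τ ∧ (ltIn τ y b ∨ y = b)} := fun h =>
      h.2.elim hdb (fun h' => hbA (h' ▸ hdA))
    have haB : a ∉ {y | y ∈ τ ∧ (ltIn τ y b ∨ y = b)} := fun h =>
      h.2.elim (fun h' => ltIn_asymm hba h') (fun h' => hbA (h' ▸ haA))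
    by_cases hcb : ltIn τ c b ∨ c = b
    · -- use B = Ble b
      by_cases hbd : b < d
      · exact sep_no_mix (hsep _ (Ble_mem_IdSet τ b)) (le_of_lt hab) (le_of_lt hbd)
          ⟨haA, haB⟩ ⟨⟨hbτ, Or.inr rfl⟩, hbA⟩ ⟨hdA, hdB⟩
      · have hdb2 : d < b := lt_of_le_of_ne (not_lt.mp hbd) (fun h => hbA (h ▸ hdA))
        exact sep_no_mix' (hsep _ (Ble_mem_IdSet τ b)) (le_of_lt hcd) (le_of_lt hdb2)
          ⟨⟨hcτ, hcb⟩, hcA⟩ ⟨hdA, hdB⟩ ⟨⟨hbτ, Or.inr rfl⟩, hbA⟩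
    · have hbc : ltIn τ b c := by
        rcases ltIn_total hτn hbτ hcτ (fun h => hcb (Or.inr h.symm)) with h|h
        · exact h
        · exact absurd (Or.inl h) hcb
      have hdBc : d ∉ {y | y ∈ τ ∧ (ltIn τ y c ∨ y = c)} := fun h =>
        h.2.elim (fun h' => ltIn_asymm hcd' h') (fun h' => hcA (h' ▸ hdA))
      by_cases hac' : ltIn τ a c
      · by_cases hbd : b < d
        · -- use B = Blt a with triple a < b < d
          have had : ltIn τ a d := ltIn_trans hac' hcd'
          exact sep_no_mix (hsep _ (Blt_mem_IdSet τ a)) (le_of_lt hab) (le_of_lt hbd)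
            ⟨haA, fun h => ltIn_irrefl τ a h.2⟩ ⟨⟨hbτ, hba⟩, hbA⟩
            ⟨hdA, fun h => ltIn_asymm had h.2⟩
        · have hdb2 : d < b := lt_of_le_of_ne (not_lt.mp hbd) (fun h => hbA (h ▸ hdA))
          -- use B = Ble c with triple c < d < b
          exact sep_no_mix' (hsep _ (Ble_mem_IdSet τ c)) (le_of_lt hcd) (le_of_lt hdb2)
            ⟨⟨hcτ, Or.inr rfl⟩, hcA⟩ ⟨hdA, hdBc⟩ ⟨⟨hbτ, Or.inl hbc⟩, hbA⟩
      · have hca' : ltIn τ c a := by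
          rcases ltIn_total hτn hcτ haτ (fun h => hcA (h ▸ haA)) with h|h
          · exact h
          · exact absurd h hac'
        have haBc : a ∉ {y | y ∈ τ ∧ (ltIn τ y c ∨ y = c)} := fun h =>
          h.2.elim (fun h' => ltIn_asymm hca' h') (fun h' => hcA (h' ▸ haA))
        by_cases hbd : b < d
        · exact sep_no_mix (hsep _ (Ble_mem_IdSet τ c)) (le_of_lt hab) (le_of_lt hbd)
            ⟨haA, haBc⟩ ⟨⟨hbτ, Or.inl hbc⟩, hbA⟩ ⟨hdA, hdBc⟩
        · have hdb2 : d < b := lt_of_le_of_ne (not_lt.mp hbd) (fun h => hbA (h ▸ hdA))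
          exact sep_no_mix' (hsep _ (Ble_mem_IdSet τ c)) (le_of_lt hcd) (le_of_lt hdb2)
            ⟨⟨hcτ, Or.inr rfl⟩, hcA⟩ ⟨hdA, hdBc⟩ ⟨⟨hbτ, Or.inl hbc⟩, hbA⟩

lemma no_triple_mixed (hσ : σ ∈ LinWords n) (hτ : τ ∈ LinWords n)
    (hρ : ρ ∈ LinWords n) (hμ : μ ∈ LinWords n)
    (hμσ : InvPairs μ ⊆ InvPairs σ) (hμτ : InvPairs μ ⊆ InvPairs τ)
    (hA : A ∈ IdSet σ) (hB : B ∈ IdSet τ)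
    (hA' : A ∈ IdSet ρ ∪ IdSet μ) (hB' : B ∈ IdSet ρ ∪ IdSet μ)
    {i j k : ℕ} (hij : i < j) (hjk : j < k)
    (hi : i ∈ A \ B) (hj : j ∈ B \ A) (hk : k ∈ A \ B) : False := by
  have hσn := nodup_linwords hσ
  have hiσ : i ∈ σ := hA.1 i hi.1
  have hjτ : j ∈ τ := hB.1 j hj.1
  have hkσ : k ∈ σ := hA.1 k hk.1
  rcases hA' with hAρ | hAμ
  · rcases hB' with hBρ | hBμ
    · exact same_word_no_cross (nodup_linwords hρ) hAρ hBρ hi hj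
    · have hiμ : i ∈ μ := mem_trans_words hσ hμ hiσ
      have hjμ : j ∈ μ := mem_trans_words hτ hμ hjτ
      have hlt : ltIn μ j i := ideal_cross (nodup_linwords hμ) hBμ hj.1 hiμ hi.2
      have hmem : (i, j) ∈ InvPairs μ := ⟨hiμ, hjμ, hij, hlt⟩
      have h1 : ltIn σ j i := (hμσ hmem).2.2.2
      have h2 : ltIn σ i j := ideal_cross hσn hA hi.1 (mem_trans_words hτ hσ hjτ) hj.2
      exact ltIn_asymm h2 h1
  · have hjμ : j ∈ μ := mem_trans_words hτ hμ hjτ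
    have hkμ : k ∈ μ := mem_trans_words hσ hμ hkσ
    have hlt : ltIn μ k j := ideal_cross (nodup_linwords hμ) hAμ hk.1 hjμ hj.2
    have hmem : (j, k) ∈ InvPairs μ := ⟨hjμ, hkμ, hjk, hlt⟩
    have h1 : ltIn τ k j := (hμτ hmem).2.2.2
    have h2 : ltIn τ j k :=
      ideal_cross (nodup_linwords hτ) hB hj.1 (mem_trans_words hσ hτ hkσ) hk.2
    exact ltIn_asymm h2 h1

lemma sep_of_subset (hσ : σ ∈ LinWords n) (hτ : τ ∈ LinWords n)
    (hρ : ρ ∈ LinWords n) (hμ : μ ∈ LinWords n)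
    (hμσ : InvPairs μ ⊆ InvPairs σ) (hμτ : InvPairs μ ⊆ InvPairs τ)
    (hsub : IdSet σ ∪ IdSet τ ⊆ IdSet ρ ∪ IdSet μ) :
    SepSystem (IdSet σ ∪ IdSet τ) := by
  have mixed : ∀ (σ' τ' : List ℕ), σ' ∈ LinWords n → τ' ∈ LinWords n →
      InvPairs μ ⊆ InvPairs σ' → InvPairs μ ⊆ InvPairs τ' →
      ∀ A B : Set ℕ, A ∈ IdSet σ' → B ∈ IdSet τ' →
      A ∈ IdSet ρ ∪ IdSet μ → B ∈ IdSet ρ ∪ IdSet μ → Separated A B := by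
    intro σ' τ' hσ' hτ' hμσ' hμτ' A B hA hB hA' hB'
    by_contra hns
    rcases exists_triple_of_not_sep hns with ⟨x,y,z,h1,h2,hx,hy,hz⟩ | ⟨x,y,z,h1,h2,hx,hy,hz⟩
    · exact no_triple_mixed hσ' hτ' hρ hμ hμσ' hμτ' hA hB hA' hB' h1 h2 hx hy hz
    · exact no_triple_mixed hτ' hσ' hρ hμ hμτ' hμσ' hB hA hB' hA' h1 h2 hx hy hz
  intro A hA B hB
  rcases hA with hAσ | hAτ <;> rcases hB with hBσ | hBτ
  · exact separated_of_same_word (nodup_linwords hσ) hAσ hBσ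
  · exact mixed σ τ hσ hτ hμσ hμτ A B hAσ hBτ (hsub (Or.inl hAσ)) (hsub (Or.inr hBτ))
  · exact mixed τ σ hτ hσ hμτ hμσ A B hAτ hBσ (hsub (Or.inr hAτ)) (hsub (Or.inl hBσ))
  · exact separated_of_same_word (nodup_linwords hτ) hAτ hBτ

lemma subset_of_sep (hσ : σ ∈ LinWords n) (hτ : τ ∈ LinWords n)
    (hρ : ρ ∈ LinWords n) (hμ : μ ∈ LinWords n)
    (hρub : InvPairs σ ⊆ InvPairs ρ ∧ InvPairs τ ⊆ InvPairs ρ)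
    (hρlub : ∀ χ ∈ LinWords n, InvPairs σ ⊆ InvPairs χ → InvPairs τ ⊆ InvPairs χ →
      InvPairs ρ ⊆ InvPairs χ)
    (hμlb : InvPairs μ ⊆ InvPairs σ ∧ InvPairs μ ⊆ InvPairs τ)
    (hμglb : ∀ χ ∈ LinWords n, InvPairs χ ⊆ InvPairs σ → InvPairs χ ⊆ InvPairs τ →
      InvPairs χ ⊆ InvPairs μ)
    (hsep : SepSystem (IdSet σ ∪ IdSet τ)) :
    IdSet σ ∪ IdSet τ ⊆ IdSet ρ ∪ IdSet μ := by
  rintro A (hA | hA)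
  · have hs : ∀ B ∈ IdSet τ, Separated A B := fun B hB => hsep A (Or.inl hA) B (Or.inr hB)
    rcases dichotomy hσ hτ hA hs with hN | hP
    · exact Or.inl (mem_IdSet_rho hσ hτ hρ hρub.1 hρlub hA hN)
    · exact Or.inr (mem_IdSet_mu hσ hτ hμ hμlb.1 hμglb hA hP)
  · have hs : ∀ B ∈ IdSet σ, Separated A B := fun B hB => hsep A (Or.inr hA) B (Or.inl hB)
    rcases dichotomy hτ hσ hA hs with hN | hP
    · exact Or.inl (mem_IdSet_rho hτ hσ hρ hρub.2 (fun χ hχ h1 h2 => hρlub χ hχ h2 h1) hA hN)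
    · exact Or.inr (mem_IdSet_mu hτ hσ hμ hμlb.2 (fun χ hχ h1 h2 => hμglb χ hχ h2 h1) hA hP)

lemma inter_subset (hσ : σ ∈ LinWords n) (hτ : τ ∈ LinWords n)
    (hρ : ρ ∈ LinWords n) (hμ : μ ∈ LinWords n)
    (hρub : InvPairs σ ⊆ InvPairs ρ ∧ InvPairs τ ⊆ InvPairs ρ)
    (hρlub : ∀ χ ∈ LinWords n, InvPairs σ ⊆ InvPairs χ → InvPairs τ ⊆ InvPairs χ →
      InvPairs ρ ⊆ InvPairs χ)
    (hμlb : InvPairs μ ⊆ InvPairs σ ∧ InvPairs μ ⊆ InvPairs τ)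
    (hμglb : ∀ χ ∈ LinWords n, InvPairs χ ⊆ InvPairs σ → InvPairs χ ⊆ InvPairs τ →
      InvPairs χ ⊆ InvPairs μ) :
    IdSet σ ∩ IdSet τ ⊆ IdSet ρ ∩ IdSet μ := by
  rintro A ⟨hAσ, hAτ⟩
  have hτn := nodup_linwords hτ
  constructor
  · apply mem_IdSet_rho hσ hτ hρ hρub.1 hρlub hAσ
    intro i j hij hiσ hjσ hiA hjA
    exact ltIn_asymm (ideal_cross hτn hAτ hiA (mem_trans_words hσ hτ hjσ) hjA)
  · apply mem_IdSet_mu hσ hτ hμ hμlb.1 hμglb hAσ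
    intro i j hij hiσ hjσ hjA hiA
    exact ideal_cross hτn hAτ hjA (mem_trans_words hσ hτ hiσ) hiA

lemma union_eq_of_subset (hσ : σ ∈ LinWords n) (hτ : τ ∈ LinWords n)
    (hρ : ρ ∈ LinWords n) (hμ : μ ∈ LinWords n)
    (hsub : IdSet σ ∪ IdSet τ ⊆ IdSet ρ ∪ IdSet μ)
    (hint : IdSet σ ∩ IdSet τ ⊆ IdSet ρ ∩ IdSet μ) :
    IdSet σ ∪ IdSet τ = IdSet ρ ∪ IdSet μ := by
  have f1 := idset_finite (nodup_linwords hσ)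
  have f2 := idset_finite (nodup_linwords hτ)
  have f3 := idset_finite (nodup_linwords hρ)
  have f4 := idset_finite (nodup_linwords hμ)
  have h1 : (IdSet σ ∪ IdSet τ).ncard + (IdSet σ ∩ IdSet τ).ncard = (n+1) + (n+1) := by
    rw [Set.ncard_union_add_ncard_inter _ _ f1 f2, ncard_idset hσ, ncard_idset hτ]
  have h2 : (IdSet ρ ∪ IdSet μ).ncard + (IdSet ρ ∩ IdSet μ).ncard = (n+1) + (n+1) := by
    rw [Set.ncard_union_add_ncard_inter _ _ f3 f4, ncard_idset hρ, ncard_idset hμ]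
  have h3 : (IdSet σ ∩ IdSet τ).ncard ≤ (IdSet ρ ∩ IdSet μ).ncard :=
    Set.ncard_le_ncard hint (f3.inter_of_left _)
  exact Set.eq_of_subset_of_ncard_le hsub (by omega) (f3.union f4)

end St11

/-- for `σ, τ ∈ L([n])` with `ρ` a least upper bound and `μ` a
greatest lower bound of `{σ, τ}` in the weak Bruhat order, the following are
equivalent: (a) `Id(σ) ∪ Id(τ)` is separated; (b) `Id(σ) ∪ Id(τ) = Id(ρ) ∪ Id(μ)`;
(c) `Id(σ) ∪ Id(τ) ⊆ Id(ρ) ∪ Id(μ)`. -/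
theorem statement_11 (n : ℕ) (σ τ ρ μ : List ℕ)
    (hσ : σ ∈ LinWords n) (hτ : τ ∈ LinWords n)
    (hρ : ρ ∈ LinWords n) (hμ : μ ∈ LinWords n)
    (hρub : InvPairs σ ⊆ InvPairs ρ ∧ InvPairs τ ⊆ InvPairs ρ)
    (hρlub : ∀ χ ∈ LinWords n, InvPairs σ ⊆ InvPairs χ → InvPairs τ ⊆ InvPairs χ →
      InvPairs ρ ⊆ InvPairs χ)
    (hμlb : InvPairs μ ⊆ InvPairs σ ∧ InvPairs μ ⊆ InvPairs τ)
    (hμglb : ∀ χ ∈ LinWords n, InvPairs χ ⊆ InvPairs σ → InvPairs χ ⊆ InvPairs τ →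
      InvPairs χ ⊆ InvPairs μ) :
    (SepSystem (IdSet σ ∪ IdSet τ) ↔ IdSet σ ∪ IdSet τ = IdSet ρ ∪ IdSet μ) ∧
    (IdSet σ ∪ IdSet τ = IdSet ρ ∪ IdSet μ ↔ IdSet σ ∪ IdSet τ ⊆ IdSet ρ ∪ IdSet μ) := by
  have keyCA : IdSet σ ∪ IdSet τ ⊆ IdSet ρ ∪ IdSet μ → SepSystem (IdSet σ ∪ IdSet τ) :=
    St11.sep_of_subset hσ hτ hρ hμ hμlb.1 hμlb.2
  have keyAB : SepSystem (IdSet σ ∪ IdSet τ) → IdSet σ ∪ IdSet τ = IdSet ρ ∪ IdSet μ :=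
    fun hsep => St11.union_eq_of_subset hσ hτ hρ hμ
      (St11.subset_of_sep hσ hτ hρ hμ hρub hρlub hμlb hμglb hsep)
      (St11.inter_subset hσ hτ hρ hμ hρub hρlub hμlb hμglb)
  exact ⟨⟨keyAB, fun hb => keyCA hb.subset⟩,
    ⟨fun hb => hb.subset, fun hc => keyAB (keyCA hc)⟩⟩
end

section
/- If D ⊆ L([n]) and D' ⊆ L([n']) are peak-pit domains, then the set of concatenations {σ*τ : σ ∈ D, τ ∈ D'} ⊆ L([n+n']) is a peak-pit domain, and its cardinality equals |D|·|D'|. -/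
/-- `γ n`: the maximum cardinality of a peak-pit domain in `L([n])`. -/

lemma indexOf_map_addn (n : ℕ) (l : List ℕ) (a : ℕ) :
    (l.map (· + n)).idxOf (a + n) = l.idxOf a := by
  induction l with
  | nil => simp
  | cons x xs ih =>
    simp only [List.map_cons, List.idxOf_cons]
    by_cases h : x = a
    · subst h; simp
    · have hne : x + n ≠ a + n := by omega
      rw [Bool.cond_eq_if, Bool.cond_eq_if, if_neg (by simpa using hne),
        if_neg (by simpa using h), ih]

lemma concat_ltIn_left (n : ℕ) (σ τ : List ℕ) {a b : ℕ} (ha : a ∈ σ) (hb : b ∈ σ) :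
    ltIn (concatWord n σ τ) a b ↔ ltIn σ a b := by
  unfold ltIn concatWord
  rw [List.idxOf_append_of_mem ha, List.idxOf_append_of_mem hb]

lemma concat_not_ltIn_cross (n : ℕ) (σ τ : List ℕ) {a b : ℕ} (ha : a ∈ σ) (hb : b ∉ σ) :
    ¬ ltIn (concatWord n σ τ) b a := by
  unfold ltIn concatWord
  rw [List.idxOf_append_of_mem ha, List.idxOf_append_of_notMem hb]
  have h1 : σ.idxOf a < σ.length := List.idxOf_lt_length_iff.2 ha
  omega

lemma concat_ltIn_right (n : ℕ) (σ τ : List ℕ) {a b : ℕ}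
    (ha : a + n ∉ σ) (hb : b + n ∉ σ) :
    ltIn (concatWord n σ τ) (a + n) (b + n) ↔ ltIn τ a b := by
  unfold ltIn concatWord
  rw [List.idxOf_append_of_notMem ha, List.idxOf_append_of_notMem hb,
    indexOf_map_addn, indexOf_map_addn]
  constructor <;> intro h <;> omega

lemma mem_of_linwords {n : ℕ} {σ : List ℕ} (h : σ ∈ LinWords n) {x : ℕ} :
    x ∈ σ ↔ 1 ≤ x ∧ x ≤ n := by
  rw [LinWords, Set.mem_setOf_eq] at h
  rw [h.mem_iff, List.mem_range'_1]
  omega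

lemma length_of_linwords {n : ℕ} {σ : List ℕ} (h : σ ∈ LinWords n) : σ.length = n := by
  rw [LinWords, Set.mem_setOf_eq] at h
  rw [h.length_eq, List.length_range']

/-- the concatenation of two peak-pit domains is a peak-pit domain
in `L([n+n'])` of cardinality `|D| · |D'|`. -/
theorem statement_12 (n n' : ℕ) (D D' : Set (List ℕ))
    (hD : D ⊆ LinWords n) (hD' : D' ⊆ LinWords n')
    (hpp : IsPeakPit n D) (hpp' : IsPeakPit n' D') :
    ConcatDomain n D D' ⊆ LinWords (n + n') ∧
    IsPeakPit (n + n') (ConcatDomain n D D') ∧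
    (ConcatDomain n D D').ncard = D.ncard * D'.ncard :=  by
  constructor
  · rintro l ⟨σ, hσ, τ, hτ, rfl⟩
    have hσ' : σ.Perm (List.range' 1 n) := hD hσ
    have hτ' : τ.Perm (List.range' 1 n') := hD' hτ
    have hmap : (τ.map (· + n)).Perm (List.range' (1 + n) n') := by
      have h2 := hτ'.map (n + ·)
      rw [List.map_add_range'] at h2
      have he : (· + n) = (n + ·) := by funext x; omega
      rw [he]
      rwa [(by omega : n + 1 = 1 + n)] at h2
    have : (concatWord n σ τ).Perm (List.range' 1 n ++ List.range' (1 + n) n') :=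
      hσ'.append hmap
    rw [LinWords, Set.mem_setOf_eq]
    have hr : List.range' 1 n ++ List.range' (1 + n) n' = List.range' 1 (n + n') :=
      (List.range'_append_1 (s := 1) (m := n) (n := n')).trans (by rw [Nat.add_comm])
    rwa [hr] at this
  refine ⟨?_, ?_⟩
  · intro i j k hi hij hjk hk
    by_cases hkn : k ≤ n
    · -- all three in the first block
      have him : ∀ σ ∈ D, i ∈ σ := fun σ hσ => (mem_of_linwords (hD hσ)).2 ⟨hi, by omega⟩
      have hjm : ∀ σ ∈ D, j ∈ σ := fun σ hσ => (mem_of_linwords (hD hσ)).2 ⟨by omega, by omega⟩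
      have hkm : ∀ σ ∈ D, k ∈ σ := fun σ hσ => (mem_of_linwords (hD hσ)).2 ⟨by omega, hkn⟩
      rcases hpp i j k hi hij hjk hkn with hP | hP
      · left
        rintro w ⟨σ, hσ, τ, hτ, rfl⟩ ⟨h1, h2⟩
        rw [concat_ltIn_left n σ τ (hjm σ hσ) (him σ hσ)] at h1
        rw [concat_ltIn_left n σ τ (hjm σ hσ) (hkm σ hσ)] at h2
        exact hP σ hσ ⟨h1, h2⟩
      · right
        rintro w ⟨σ, hσ, τ, hτ, rfl⟩ ⟨h1, h2⟩
        rw [concat_ltIn_left n σ τ (him σ hσ) (hjm σ hσ)] at h1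
        rw [concat_ltIn_left n σ τ (hkm σ hσ) (hjm σ hσ)] at h2
        exact hP σ hσ ⟨h1, h2⟩
    · push_neg at hkn
      by_cases hjn : j ≤ n
      · -- i < j ≤ n < k : pit condition holds
        right
        rintro w ⟨σ, hσ, τ, hτ, rfl⟩ ⟨h1, h2⟩
        have hjm : j ∈ σ := (mem_of_linwords (hD hσ)).2 ⟨by omega, hjn⟩
        have hkm : k ∉ σ := fun h => by
          have := (mem_of_linwords (hD hσ)).1 h; omega
        exact concat_not_ltIn_cross n σ τ hjm hkm h2
      · push_neg at hjn
        by_cases hin : i ≤ n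
        · -- i ≤ n < j < k : peak condition holds
          left
          rintro w ⟨σ, hσ, τ, hτ, rfl⟩ ⟨h1, h2⟩
          have him : i ∈ σ := (mem_of_linwords (hD hσ)).2 ⟨hi, hin⟩
          have hjm : j ∉ σ := fun h => by
            have := (mem_of_linwords (hD hσ)).1 h; omega
          exact concat_not_ltIn_cross n σ τ him hjm h1
        · -- all three in the second block
          push_neg at hin
          have hmem : ∀ σ ∈ D, ∀ x : ℕ, n < x → x ∉ σ := fun σ hσ x hx h => by
            have := (mem_of_linwords (hD hσ)).1 h; omega
          have hieq : i - n + n = i := by omega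
          have hjeq : j - n + n = j := by omega
          have hkeq : k - n + n = k := by omega
          have key : ∀ σ ∈ D, ∀ τ, ∀ a b : ℕ, n < a → n < b →
              (ltIn (concatWord n σ τ) a b ↔ ltIn τ (a - n) (b - n)) := by
            intro σ hσ τ a b ha hb
            have h1 : a - n + n ∉ σ := by rw [(by omega : a - n + n = a)]; exact hmem σ hσ a ha
            have h2 : b - n + n ∉ σ := by rw [(by omega : b - n + n = b)]; exact hmem σ hσ b hb
            have := concat_ltIn_right n σ τ h1 h2
            rwa [(by omega : a - n + n = a), (by omega : b - n + n = b)] at this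
          rcases hpp' (i - n) (j - n) (k - n) (by omega) (by omega) (by omega) (by omega)
            with hP | hP
          · left
            rintro w ⟨σ, hσ, τ, hτ, rfl⟩ ⟨h1, h2⟩
            rw [key σ hσ τ j i hjn hin] at h1
            rw [key σ hσ τ j k hjn hkn] at h2
            exact hP τ hτ ⟨h1, h2⟩
          · right
            rintro w ⟨σ, hσ, τ, hτ, rfl⟩ ⟨h1, h2⟩
            rw [key σ hσ τ i j hin hjn] at h1
            rw [key σ hσ τ k j hkn hjn] at h2
            exact hP τ hτ ⟨h1, h2⟩
  · -- cardinality
    have himg : ConcatDomain n D D' = (fun p : List ℕ × List ℕ => concatWord n p.1 p.2) '' (D ×ˢ D') := by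
      ext l
      constructor
      · rintro ⟨σ, hσ, τ, hτ, rfl⟩
        exact ⟨(σ, τ), ⟨hσ, hτ⟩, rfl⟩
      · rintro ⟨⟨σ, τ⟩, ⟨hσ, hτ⟩, rfl⟩
        exact ⟨σ, hσ, τ, hτ, rfl⟩
    rw [himg]
    have hinj : Set.InjOn (fun p : List ℕ × List ℕ => concatWord n p.1 p.2) (D ×ˢ D') := by
      rintro ⟨σ₁, τ₁⟩ ⟨h1, h1'⟩ ⟨σ₂, τ₂⟩ ⟨h2, h2'⟩ heq
      simp only at heq
      unfold concatWord at heq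
      have hlen : σ₁.length = σ₂.length := by
        rw [length_of_linwords (hD h1), length_of_linwords (hD h2)]
      obtain ⟨hσ, hτ⟩ := List.append_inj heq hlen
      have hτ' : τ₁ = τ₂ := by
        have hf : Function.Injective (· + n : ℕ → ℕ) := add_left_injective n
        exact List.map_injective_iff.2 hf hτ
      simp [hσ, hτ']
    rw [Set.ncard_image_of_injOn hinj, ← Nat.card_coe_set_eq, ← Nat.card_coe_set_eq,
      ← Nat.card_coe_set_eq, Nat.card_congr (Equiv.Set.prod D D'), Nat.card_prod]
end
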